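/- arXiv:1908.09030 — 3 statements merged into one kernel-verified Lean document; each statement's English description precedes it below -/
import Mathlib

section
/- Let H = (E, {X_1, …, X_n}) be a hypergraph satisfying property (H2) such that the line graph G_H is a complete graph on {1,…,n}, and such that whenever p and q are distinct elements of {1,…,n} there are elements a ∈ X_p and b ∈ X_q with no i ∈ {1,…,n} satisfying {a,b} ⊆ X_i. Let ρ be the polymatroid on E given by ρ(A) = Σ_{i=1}^n min(|A ∩ X_i|, 1). Let σ be any polymatroid on E with σ(A) = ρ(A) whenever (i) |A| ≤ 2, or (ii) |A| = 3 and A ⊆ X_i for some i. If σ(E) < n, then σ is not k-decomposable for any positive integer k. -/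
variable {α : Type*}

/-- `ρ` is an (integer) polymatroid on ground set `E`. -/
def IsPolymatroidOn [DecidableEq α] (E : Finset α) (ρ : Finset α → ℤ) : Prop :=
  ρ ∅ = 0 ∧
  (∀ A B : Finset α, A ⊆ B → B ⊆ E → ρ A ≤ ρ B) ∧
  (∀ A B : Finset α, A ⊆ E → B ⊆ E → ρ (A ∪ B) + ρ (A ∩ B) ≤ ρ A + ρ B)

/-- `r` is the rank function of a matroid on `E` (matroids are exactly the
`1`-polymatroids). -/
def IsMatroidRankOn [DecidableEq α] (E : Finset α) (r : Finset α → ℤ) : Prop :=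
  IsPolymatroidOn E r ∧ ∀ e ∈ E, r {e} ≤ 1

/-- `ρ` is a sum of `k` matroid rank functions on `E`. -/
def KDecomposable [DecidableEq α] (k : ℕ) (E : Finset α) (ρ : Finset α → ℤ) : Prop :=
  ∃ M : Fin k → Finset α → ℤ,
    (∀ i, IsMatroidRankOn E (M i)) ∧ ∀ X ⊆ E, ρ X = ∑ i, M i X

/-- The polymatroid `ρ(A) = Σ_i min(|A ∩ X_i|, 1)` (all `t_i = 1`). -/
def hypRho1 [DecidableEq α] {n : ℕ} (X : Fin n → Finset α) : Finset α → ℤ :=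
  fun A => ∑ i, min (((A ∩ X i).card : ℤ)) 1

/-- The "defect" of a pair in a rank function. -/
def defect [DecidableEq α] (r : Finset α → ℤ) (a b : α) : ℤ :=
  r {a} + r {b} - r ({a, b} : Finset α)

section AuxSets
variable [DecidableEq α]

lemma pair_union_eq (a b c : α) : ({a, c} : Finset α) ∪ {b, c} = {a, b, c} := by
  ext x
  simp only [Finset.mem_union, Finset.mem_insert, Finset.mem_singleton]
  tauto

lemma pair_inter_eq {a b : α} (c : α) (hab : a ≠ b) :
    ({a, c} : Finset α) ∩ {b, c} = {c} := by
  ext x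
  simp only [Finset.mem_inter, Finset.mem_insert, Finset.mem_singleton]
  constructor
  · rintro ⟨rfl | rfl, h | h⟩ <;> tauto
  · rintro rfl; tauto

lemma tri_union_a (a b c : α) : ({a, b} : Finset α) ∪ {a, c} = {a, b, c} := by
  ext x
  simp only [Finset.mem_union, Finset.mem_insert, Finset.mem_singleton]
  tauto

lemma tri_inter_a (a : α) {b c : α} (hbc : b ≠ c) :
    ({a, b} : Finset α) ∩ {a, c} = {a} := by
  ext x
  simp only [Finset.mem_inter, Finset.mem_insert, Finset.mem_singleton]
  constructor
  · rintro ⟨rfl | rfl, h | h⟩ <;> tauto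
  · rintro rfl; tauto

lemma tri_union_b (a b c : α) : ({a, b} : Finset α) ∪ {b, c} = {a, b, c} := by
  ext x
  simp only [Finset.mem_union, Finset.mem_insert, Finset.mem_singleton]
  tauto

lemma tri_inter_b {a c : α} (b : α) (hac : a ≠ c) :
    ({a, b} : Finset α) ∩ {b, c} = {b} := by
  ext x
  simp only [Finset.mem_inter, Finset.mem_insert, Finset.mem_singleton]
  constructor
  · rintro ⟨rfl | rfl, h | h⟩ <;> tauto
  · rintro rfl; tauto

lemma hypRho1_eq {n : ℕ} (X : Fin n → Finset α) (A : Finset α) :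
    hypRho1 X A = ∑ i, if (A ∩ X i).Nonempty then (1 : ℤ) else 0 := by
  unfold hypRho1
  refine Finset.sum_congr rfl fun i _ => ?_
  rcases (A ∩ X i).eq_empty_or_nonempty with h | h
  · simp [h]
  · rw [if_pos h, min_eq_right]
    exact_mod_cast Nat.one_le_iff_ne_zero.mpr (Finset.card_ne_zero_of_mem h.choose_spec)

lemma ne1_iff (a : α) (s : Finset α) : (({a} : Finset α) ∩ s).Nonempty ↔ a ∈ s := by
  simp [Finset.Nonempty]

lemma ne2_iff (a b : α) (s : Finset α) :
    (({a, b} : Finset α) ∩ s).Nonempty ↔ a ∈ s ∨ b ∈ s := by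
  constructor
  · rintro ⟨x, hx⟩
    simp only [Finset.mem_inter, Finset.mem_insert, Finset.mem_singleton] at hx
    rcases hx.1 with rfl | rfl
    · exact Or.inl hx.2
    · exact Or.inr hx.2
  · rintro (h | h)
    · exact ⟨a, by simp [h]⟩
    · exact ⟨b, by simp [h]⟩

lemma ne3_iff (a b c : α) (s : Finset α) :
    (({a, b, c} : Finset α) ∩ s).Nonempty ↔ a ∈ s ∨ b ∈ s ∨ c ∈ s := by
  constructor
  · rintro ⟨x, hx⟩
    simp only [Finset.mem_inter, Finset.mem_insert, Finset.mem_singleton] at hx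
    rcases hx.1 with rfl | rfl | rfl
    · exact Or.inl hx.2
    · exact Or.inr (Or.inl hx.2)
    · exact Or.inr (Or.inr hx.2)
  · rintro (h | h | h)
    · exact ⟨a, by simp [h]⟩
    · exact ⟨b, by simp [h]⟩
    · exact ⟨c, by simp [h]⟩

end AuxSets

theorem stmt7 [DecidableEq α] {n : ℕ} (E : Finset α)
    (X : Fin n → Finset α)
    (hXsub : ∀ i, X i ⊆ E) (hXne : ∀ i, (X i).Nonempty)
    (hXinj : Function.Injective X)
    (hH2 : ∀ i j, i ≠ j → (X i ∩ X j).card ≤ 1)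
    (hcomplete : ∀ p q : Fin n, p ≠ q → (X p ∩ X q).Nonempty)
    (hsep : ∀ p q : Fin n, p ≠ q →
      ∃ a ∈ X p, ∃ b ∈ X q, ∀ i : Fin n, ¬ (a ∈ X i ∧ b ∈ X i))
    (σ : Finset α → ℤ) (hσ : IsPolymatroidOn E σ)
    (hagree : ∀ A ⊆ E,
      (A.card ≤ 2 ∨ (A.card = 3 ∧ ∃ i, A ⊆ X i)) →
      σ A = hypRho1 X A)
    (hσE : σ E < (n : ℤ)) :
    ∀ k : ℕ, 0 < k → ¬ KDecomposable k E σ := by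
  obtain ⟨hσ0, hσmono, hσsub⟩ := hσ
  rintro k hk ⟨M, hM, hMsum⟩
  -- small n : contradiction even without decomposability
  rcases Nat.lt_or_ge n 2 with hn | hn
  · have hn01 : n = 0 ∨ n = 1 := by omega
    rcases hn01 with rfl | rfl
    · have h0 : (0 : ℤ) ≤ σ E := by
        have := hσmono ∅ E (Finset.empty_subset E) (Finset.Subset.refl E)
        rwa [hσ0] at this
      norm_num at hσE
      linarith
    · obtain ⟨a, ha⟩ := hXne 0
      have haE : a ∈ E := hXsub 0 ha
      have h1 : σ {a} = 1 := by
        rw [hagree {a} (by simp [haE]) (Or.inl (by simp)), hypRho1_eq]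
        have hne : (({a} : Finset α) ∩ X 0).Nonempty := ⟨a, by simp [ha]⟩
        rw [Fin.sum_univ_one, if_pos hne]
      have h2 := hσmono {a} E (by simp [haE]) (Finset.Subset.refl E)
      rw [h1] at h2
      norm_num at hσE
      linarith
  -- main case : n ≥ 2
  have hnt : Nontrivial (Fin n) := Fin.nontrivial_iff_two_le.mpr hn
  -- basic matroid facts
  have Mzero : ∀ j, M j ∅ = 0 := fun j => (hM j).1.1
  have Mmono : ∀ j, ∀ A B : Finset α, A ⊆ B → B ⊆ E → M j A ≤ M j B :=
    fun j => (hM j).1.2.1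
  have Msub : ∀ j, ∀ A B : Finset α, A ⊆ E → B ⊆ E →
      M j (A ∪ B) + M j (A ∩ B) ≤ M j A + M j B := fun j => (hM j).1.2.2
  have Mnn : ∀ j, ∀ A : Finset α, A ⊆ E → 0 ≤ M j A := by
    intro j A hA
    have := Mmono j ∅ A (Finset.empty_subset A) hA
    rwa [Mzero] at this
  -- the unique common block
  have honly : ∀ (p : Fin n) (a b : α), a ∈ X p → b ∈ X p → a ≠ b →
      ∀ i : Fin n, a ∈ X i → b ∈ X i → i = p := by
    intro p a b ha hb hab i hai hbi
    by_contra hip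
    have hsub2 : ({a, b} : Finset α) ⊆ X i ∩ X p := by
      intro x hx
      simp only [Finset.mem_insert, Finset.mem_singleton] at hx
      rcases hx with rfl | rfl <;> simp [Finset.mem_inter, *]
    have h2 : 2 ≤ (X i ∩ X p).card := by
      have := Finset.card_le_card hsub2
      rwa [Finset.card_pair hab] at this
    have := hH2 i p hip
    omega
  -- a pair of distinct elements in each block
  have hpair : ∀ p : Fin n, ∃ a b : α, a ∈ X p ∧ b ∈ X p ∧ a ≠ b := by
    intro p
    obtain ⟨q, hq⟩ := exists_ne p
    obtain ⟨c, hc⟩ := hcomplete p q hq.symm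
    rw [Finset.mem_inter] at hc
    obtain ⟨a, ha, b, hb, hab⟩ := hsep p q hq.symm
    refine ⟨a, c, ha, hc.1, ?_⟩
    rintro rfl
    exact hab q ⟨hc.2, hb⟩
  -- key numerical facts about σ
  have key1 : ∀ (p : Fin n) (a b : α), a ∈ X p → b ∈ X p → a ≠ b →
      σ {a} + σ {b} - σ {a, b} = 1 := by
    intro p a b ha hb hab
    have haE := hXsub p ha
    have hbE := hXsub p hb
    rw [hagree {a} (by simp [haE]) (Or.inl (by simp)),
        hagree {b} (by simp [hbE]) (Or.inl (by simp)),
        hagree {a, b} (by simp [Finset.insert_subset_iff, haE, hbE])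
          (Or.inl (le_trans (Finset.card_insert_le a {b}) (by simp))),
        hypRho1_eq, hypRho1_eq, hypRho1_eq, ← Finset.sum_add_distrib,
        ← Finset.sum_sub_distrib]
    have hterm : ∀ i ∈ Finset.univ, ((if (({a} : Finset α) ∩ X i).Nonempty then (1 : ℤ) else 0) +
        (if (({b} : Finset α) ∩ X i).Nonempty then (1 : ℤ) else 0) -
        (if (({a, b} : Finset α) ∩ X i).Nonempty then (1 : ℤ) else 0)) =
        if i = p then (1 : ℤ) else 0 := by
      intro i _
      simp only [ne1_iff, ne2_iff]
      by_cases hip : i = p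
      · subst hip; simp [ha, hb]
      · rw [if_neg hip]
        have n1 : ¬(a ∈ X i ∧ b ∈ X i) := fun h => hip (honly p a b ha hb hab i h.1 h.2)
        by_cases q1 : a ∈ X i <;> by_cases q2 : b ∈ X i <;> simp [q1, q2] at n1 ⊢
    rw [Finset.sum_congr rfl hterm]
    simp
  have key0 : ∀ (a b : α), a ∈ E → b ∈ E → (∀ i : Fin n, ¬(a ∈ X i ∧ b ∈ X i)) →
      σ {a} + σ {b} - σ {a, b} = 0 := by
    intro a b haE hbE hnone
    rw [hagree {a} (by simp [haE]) (Or.inl (by simp)),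
        hagree {b} (by simp [hbE]) (Or.inl (by simp)),
        hagree {a, b} (by simp [Finset.insert_subset_iff, haE, hbE])
          (Or.inl (le_trans (Finset.card_insert_le a {b}) (by simp))),
        hypRho1_eq, hypRho1_eq, hypRho1_eq, ← Finset.sum_add_distrib,
        ← Finset.sum_sub_distrib]
    refine Finset.sum_eq_zero ?_
    intro i _
    simp only [ne1_iff, ne2_iff]
    have n1 := hnone i
    by_cases q1 : a ∈ X i <;> by_cases q2 : b ∈ X i <;> simp [q1, q2] at n1 ⊢
  have key3 : ∀ (p : Fin n) (a b c : α), a ∈ X p → b ∈ X p → c ∈ X p →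
      a ≠ b → a ≠ c → b ≠ c →
      σ {a} + σ {b} + σ {c} - σ {a, b, c} = 2 := by
    intro p a b c ha hb hc hab hac hbc
    have haE := hXsub p ha
    have hbE := hXsub p hb
    have hcE := hXsub p hc
    have hsub3 : ({a, b, c} : Finset α) ⊆ X p := by
      intro x hx
      simp only [Finset.mem_insert, Finset.mem_singleton] at hx
      rcases hx with rfl | rfl | rfl <;> assumption
    have hcard3 : ({a, b, c} : Finset α).card = 3 :=
      Finset.card_eq_three.mpr ⟨a, b, c, hab, hac, hbc, rfl⟩
    rw [hagree {a} (by simp [haE]) (Or.inl (by simp)),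
        hagree {b} (by simp [hbE]) (Or.inl (by simp)),
        hagree {c} (by simp [hcE]) (Or.inl (by simp)),
        hagree {a, b, c} (hsub3.trans (hXsub p)) (Or.inr ⟨hcard3, p, hsub3⟩),
        hypRho1_eq, hypRho1_eq, hypRho1_eq, hypRho1_eq,
        ← Finset.sum_add_distrib, ← Finset.sum_add_distrib, ← Finset.sum_sub_distrib]
    have hterm : ∀ i ∈ Finset.univ, ((if (({a} : Finset α) ∩ X i).Nonempty then (1 : ℤ) else 0) +
        (if (({b} : Finset α) ∩ X i).Nonempty then (1 : ℤ) else 0) +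
        (if (({c} : Finset α) ∩ X i).Nonempty then (1 : ℤ) else 0) -
        (if (({a, b, c} : Finset α) ∩ X i).Nonempty then (1 : ℤ) else 0)) =
        if i = p then (2 : ℤ) else 0 := by
      intro i _
      simp only [ne1_iff, ne3_iff]
      by_cases hip : i = p
      · subst hip; simp [ha, hb, hc]
      · rw [if_neg hip]
        have n1 : ¬(a ∈ X i ∧ b ∈ X i) := fun h => hip (honly p a b ha hb hab i h.1 h.2)
        have n2 : ¬(a ∈ X i ∧ c ∈ X i) := fun h => hip (honly p a c ha hc hac i h.1 h.2)
        have n3 : ¬(b ∈ X i ∧ c ∈ X i) := fun h => hip (honly p b c hb hc hbc i h.1 h.2)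
        by_cases q1 : a ∈ X i <;> by_cases q2 : b ∈ X i <;> by_cases q3 : c ∈ X i <;>
          simp [q1, q2, q3] at n1 n2 n3 ⊢
    rw [Finset.sum_congr rfl hterm]
    simp
  -- defect machinery
  have dsum : ∀ a b : α, a ∈ E → b ∈ E →
      ∑ j, defect (M j) a b = σ {a} + σ {b} - σ {a, b} := by
    intro a b haE hbE
    unfold defect
    rw [Finset.sum_sub_distrib, Finset.sum_add_distrib,
        ← hMsum {a} (by simp [haE]), ← hMsum {b} (by simp [hbE]),
        ← hMsum {a, b} (by simp [Finset.insert_subset_iff, haE, hbE])]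
  have dsymm : ∀ (j : Fin k) (a b : α), defect (M j) a b = defect (M j) b a := by
    intro j a b
    unfold defect
    rw [Finset.pair_comm]
    ring
  have dnn : ∀ (j : Fin k) (a b : α), a ∈ E → b ∈ E → a ≠ b → 0 ≤ defect (M j) a b := by
    intro j a b haE hbE hab
    have h := Msub j {a} {b} (by simp [haE]) (by simp [hbE])
    have hu : ({a} : Finset α) ∪ {b} = {a, b} := rfl
    rw [hu, Finset.singleton_inter_of_notMem (by simp [hab]), Mzero] at h
    unfold defect
    linarith
  have dle1 : ∀ (j : Fin k) (a b : α), a ∈ E → b ∈ E → defect (M j) a b ≤ 1 := by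
    intro j a b haE hbE
    have h1 : M j {a} ≤ 1 := (hM j).2 a haE
    have h3 : M j {b} ≤ M j {a, b} :=
      Mmono j _ _ (by simp) (by simp [Finset.insert_subset_iff, haE, hbE])
    unfold defect
    linarith
  have d1 : ∀ (j : Fin k) (a b : α), a ∈ E → b ∈ E → a ≠ b → defect (M j) a b = 1 →
      M j {a} = 1 ∧ M j {b} = 1 ∧ M j {a, b} = 1 := by
    intro j a b haE hbE hab h
    have h1 : M j {a} ≤ 1 := (hM j).2 a haE
    have h2 : M j {b} ≤ 1 := (hM j).2 b hbE
    have h3 : M j {a} ≤ M j {a, b} :=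
      Mmono j _ _ (by simp) (by simp [Finset.insert_subset_iff, haE, hbE])
    have h4 : M j {b} ≤ M j {a, b} :=
      Mmono j _ _ (by simp) (by simp [Finset.insert_subset_iff, haE, hbE])
    unfold defect at h
    refine ⟨by linarith, by linarith, by linarith⟩
  have dpick : ∀ (a b : α), a ∈ E → b ∈ E → a ≠ b → ∑ j, defect (M j) a b = 1 →
      ∃ j, defect (M j) a b = 1 := by
    intro a b haE hbE hab hs
    by_contra hcon
    push_neg at hcon
    have hall : ∀ j ∈ Finset.univ, defect (M j) a b ≤ 0 := by
      intro j _
      have h1 := dle1 j a b haE hbE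
      have h2 := hcon j
      omega
    have := Finset.sum_nonpos hall
    linarith
  -- the triple lemma : within a block, defects of pairs coincide across matroids
  have tri : ∀ (p : Fin n) (a b c : α), a ∈ X p → b ∈ X p → c ∈ X p →
      a ≠ b → a ≠ c → b ≠ c → ∀ j : Fin k,
      defect (M j) a c = defect (M j) b c ∧ defect (M j) a b = defect (M j) b c := by
    intro p a b c ha hb hc hab hac hbc
    have haE := hXsub p ha
    have hbE := hXsub p hb
    have hcE := hXsub p hc
    have hab' : ({a, b} : Finset α) ⊆ E := by simp [Finset.insert_subset_iff, haE, hbE]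
    have hac' : ({a, c} : Finset α) ⊆ E := by simp [Finset.insert_subset_iff, haE, hcE]
    have hbc' : ({b, c} : Finset α) ⊆ E := by simp [Finset.insert_subset_iff, hbE, hcE]
    have habc' : ({a, b, c} : Finset α) ⊆ E := by
      simp [Finset.insert_subset_iff, haE, hbE, hcE]
    have s3 := key3 p a b c ha hb hc hab hac hbc
    have sab : ∑ j, defect (M j) a b = 1 := by
      rw [dsum a b haE hbE]; exact key1 p a b ha hb hab
    have sac : ∑ j, defect (M j) a c = 1 := by
      rw [dsum a c haE hcE]; exact key1 p a c ha hc hac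
    have sbc : ∑ j, defect (M j) b c = 1 := by
      rw [dsum b c hbE hcE]; exact key1 p b c hb hc hbc
    have sumabc : ∑ j, M j {a, b, c} = σ {a} + σ {b} + σ {c} - 2 := by
      rw [← hMsum {a, b, c} habc']; linarith
    have sumg : ∑ j, (M j {a} + M j {b} + M j {c}) = σ {a} + σ {b} + σ {c} := by
      rw [Finset.sum_add_distrib, Finset.sum_add_distrib,
          ← hMsum {a} (by simp [haE]), ← hMsum {b} (by simp [hbE]),
          ← hMsum {c} (by simp [hcE])]
    have hleA : ∀ j ∈ Finset.univ, M j {a, b, c} ≤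
        M j {a} + M j {b} + M j {c} - defect (M j) a b - defect (M j) a c := by
      intro j _
      have h := Msub j {a, b} {a, c} hab' hac'
      rw [tri_union_a, tri_inter_a a hbc] at h
      unfold defect
      linarith
    have hRA : ∑ j, (M j {a} + M j {b} + M j {c} - defect (M j) a b - defect (M j) a c) =
        σ {a} + σ {b} + σ {c} - 2 := by
      rw [Finset.sum_sub_distrib, Finset.sum_sub_distrib, sumg, sab, sac]; ring
    have EA := (Finset.sum_eq_sum_iff_of_le hleA).mp (by rw [sumabc, hRA])
    have hleB : ∀ j ∈ Finset.univ, M j {a, b, c} ≤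
        M j {a} + M j {b} + M j {c} - defect (M j) a b - defect (M j) b c := by
      intro j _
      have h := Msub j {a, b} {b, c} hab' hbc'
      rw [tri_union_b, tri_inter_b b hac] at h
      unfold defect
      linarith
    have hRB : ∑ j, (M j {a} + M j {b} + M j {c} - defect (M j) a b - defect (M j) b c) =
        σ {a} + σ {b} + σ {c} - 2 := by
      rw [Finset.sum_sub_distrib, Finset.sum_sub_distrib, sumg, sab, sbc]; ring
    have EB := (Finset.sum_eq_sum_iff_of_le hleB).mp (by rw [sumabc, hRB])
    have hleC : ∀ j ∈ Finset.univ, M j {a, b, c} ≤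
        M j {a} + M j {b} + M j {c} - defect (M j) a c - defect (M j) b c := by
      intro j _
      have h := Msub j {a, c} {b, c} hac' hbc'
      rw [pair_union_eq, pair_inter_eq c hab] at h
      unfold defect
      linarith
    have hRC : ∑ j, (M j {a} + M j {b} + M j {c} - defect (M j) a c - defect (M j) b c) =
        σ {a} + σ {b} + σ {c} - 2 := by
      rw [Finset.sum_sub_distrib, Finset.sum_sub_distrib, sumg, sac, sbc]; ring
    have EC := (Finset.sum_eq_sum_iff_of_le hleC).mp (by rw [sumabc, hRC])
    intro j
    have e1 := EA j (Finset.mem_univ j)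
    have e2 := EB j (Finset.mem_univ j)
    have e3 := EC j (Finset.mem_univ j)
    constructor <;> linarith
  -- for every block there is a matroid in which all pairs have defect 1
  have hφex : ∀ p : Fin n, ∃ j : Fin k, ∀ x y : α, x ∈ X p → y ∈ X p → x ≠ y →
      defect (M j) x y = 1 := by
    intro p
    obtain ⟨a0, b0, ha0, hb0, h00⟩ := hpair p
    have hsum1 : ∑ j, defect (M j) a0 b0 = 1 := by
      rw [dsum a0 b0 (hXsub p ha0) (hXsub p hb0)]
      exact key1 p a0 b0 ha0 hb0 h00
    obtain ⟨j, hj⟩ := dpick a0 b0 (hXsub p ha0) (hXsub p hb0) h00 hsum1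
    refine ⟨j, fun x y hx hy hxy => ?_⟩
    have triall : ∀ (a b c : α), a ∈ X p → b ∈ X p → c ∈ X p →
        a ≠ b → a ≠ c → b ≠ c → defect (M j) a b = defect (M j) a c := by
      intro a b c ha hb hc hab hac hbc
      obtain ⟨e1, e2⟩ := tri p a b c ha hb hc hab hac hbc j
      linarith
    have hchain : defect (M j) x y = defect (M j) a0 b0 := by
      by_cases hxa : x = a0
      · rw [hxa] at hxy ⊢
        by_cases hyb : y = b0
        · rw [hyb]
        · exact triall a0 y b0 ha0 hy hb0 hxy h00 hyb
      · by_cases hxb : x = b0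
        · rw [hxb] at hxy ⊢
          by_cases hya : y = a0
          · rw [hya, dsymm j b0 a0]
          · have t := triall b0 y a0 hb0 hy ha0 hxy (fun h => h00 h.symm) hya
            rw [t, dsymm j b0 a0]
        · by_cases hya : y = a0
          · rw [hya] at hxy ⊢
            have t1 := triall a0 x b0 ha0 hx hb0 (fun h => hxy h.symm) h00 hxb
            rw [dsymm j x a0, t1]
          · by_cases hyb : y = b0
            · rw [hyb] at hxy ⊢
              have t1 := triall b0 x a0 hb0 hx ha0 (fun h => hxy h.symm)
                (fun h => h00 h.symm) hxa
              rw [dsymm j x b0, t1, dsymm j b0 a0]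
            · have t1 := triall x y a0 hx hy ha0 hxy hxa hya
              have t2 := triall a0 x b0 ha0 hx hb0 (fun h => hxa h.symm) h00 hxb
              rw [t1, dsymm j x a0, t2]
    rw [hchain]
    exact hj
  choose φ hφ using hφex
  -- hx ≠ hxa case fix done above; now injectivity of φ
  have hinj : Function.Injective φ := by
    intro p q hpq
    by_contra hne
    obtain ⟨c, hc⟩ := hcomplete p q hne
    rw [Finset.mem_inter] at hc
    obtain ⟨a, ha, b, hb, hab⟩ := hsep p q hne
    have hac : a ≠ c := by rintro rfl; exact hab q ⟨hc.2, hb⟩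
    have hbc : b ≠ c := by rintro rfl; exact hab p ⟨ha, hc.1⟩
    have habne : a ≠ b := by rintro rfl; exact hab p ⟨ha, ha⟩
    have haE := hXsub p ha
    have hbE := hXsub q hb
    have hcE := hXsub p hc.1
    have h1 : defect (M (φ p)) a c = 1 := hφ p a c ha hc.1 hac
    have h2 : defect (M (φ p)) b c = 1 := by rw [hpq]; exact hφ q b c hb hc.2 hbc
    have h0 : defect (M (φ p)) a b = 0 := by
      have hs : ∑ j, defect (M j) a b = 0 := by
        rw [dsum a b haE hbE]
        exact key0 a b haE hbE hab
      exact (Finset.sum_eq_zero_iff_of_nonneg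
        (fun j _ => dnn j a b haE hbE habne)).mp hs (φ p) (Finset.mem_univ _)
    obtain ⟨ra1, rc1, rac1⟩ := d1 (φ p) a c haE hcE hac h1
    obtain ⟨rb1, _, rbc1⟩ := d1 (φ p) b c hbE hcE hbc h2
    have rab : M (φ p) {a, b} = 2 := by unfold defect at h0; linarith
    have hac' : ({a, c} : Finset α) ⊆ E := by simp [Finset.insert_subset_iff, haE, hcE]
    have hbc' : ({b, c} : Finset α) ⊆ E := by simp [Finset.insert_subset_iff, hbE, hcE]
    have hsubm := Msub (φ p) {a, c} {b, c} hac' hbc'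
    rw [pair_union_eq, pair_inter_eq c habne] at hsubm
    have hmon : M (φ p) {a, b} ≤ M (φ p) {a, b, c} := by
      refine Mmono (φ p) _ _ ?_ (by simp [Finset.insert_subset_iff, haE, hbE, hcE])
      intro x hx
      simp only [Finset.mem_insert, Finset.mem_singleton] at hx ⊢
      tauto
    linarith
  -- in each M (φ p) there is a nonloop, so M (φ p) E ≥ 1
  have hone : ∀ p : Fin n, (1 : ℤ) ≤ M (φ p) E := by
    intro p
    obtain ⟨a0, b0, ha0, hb0, h00⟩ := hpair p
    have h := hφ p a0 b0 ha0 hb0 h00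
    obtain ⟨r1, _, _⟩ := d1 (φ p) a0 b0 (hXsub p ha0) (hXsub p hb0) h00 h
    have := Mmono (φ p) {a0} E (Finset.singleton_subset_iff.mpr (hXsub p ha0))
      (Finset.Subset.refl E)
    linarith
  -- final count
  have hcount : (n : ℤ) ≤ σ E := by
    calc (n : ℤ) = ∑ _p : Fin n, (1 : ℤ) := by simp
      _ ≤ ∑ p : Fin n, M (φ p) E := Finset.sum_le_sum fun p _ => hone p
      _ = ∑ j ∈ Finset.univ.image φ, M j E := by
          rw [Finset.sum_image (fun p _ q _ h => hinj h)]
      _ ≤ ∑ j, M j E := Finset.sum_le_sum_of_subset_of_nonneg (Finset.subset_univ _)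
          (fun j _ _ => Mnn j E (Finset.Subset.refl E))
      _ = σ E := (hMsum E (Finset.Subset.refl E)).symm
  linarith
end

section
/- Let M_1 and M_2 be matroids on a common finite ground set E. Suppose M_1 is connected and M_2 has exactly two connected components: that is, E is partitioned into nonempty disjoint sets P and Q such that the restrictions M_2|P and M_2|Q are connected and r_{M_2}(X) = r_{M_2}(X∩P) + r_{M_2}(X∩Q) for all X ⊆ E. Then the mixing graph G_{M_1,M_2} has at most two connected components. -/
variable {α : Type*}

/-- The matroid (with rank function `r`) on ground set `E` is connected: the ground
set is nonempty and the matroid is not a direct sum of two matroids on nonempty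
ground sets, i.e. the only separators are `∅` and `E`. -/
def MatroidConnectedOn [DecidableEq α] (E : Finset α) (r : Finset α → ℤ) : Prop :=
  E.Nonempty ∧
  ∀ P ⊆ E, (∀ X ⊆ E, r X = r (X ∩ P) + r (X \ P)) → P = ∅ ∨ P = E

/-- The mixing graph of two matroids (given by their rank functions `r1`, `r2`) on the
ground set `E`. -/
def mixingGraph [DecidableEq α] (E : Finset α) (r1 r2 : Finset α → ℤ) :
    SimpleGraph {A : Finset α // A ⊆ E ∧ r1 A ≠ r2 A} where
  Adj A B := A ≠ B ∧
    ((A.1 ⊂ B.1 ∨ B.1 ⊂ A.1) ∨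
      (r1 (A.1 ∩ B.1) = r2 (A.1 ∩ B.1) ∧ r1 (A.1 ∪ B.1) = r2 (A.1 ∪ B.1) ∧
        ((A.1 \ B.1) ∪ (B.1 \ A.1)).card = 2))
  symm := by
    constructor
    rintro A B ⟨hne, h⟩
    refine ⟨hne.symm, ?_⟩
    rcases h with h | ⟨h1, h2, h3⟩
    · exact Or.inl h.symm
    · refine Or.inr ⟨?_, ?_, ?_⟩
      · rwa [Finset.inter_comm]
      · rwa [Finset.union_comm]
      · rwa [Finset.union_comm]
  loopless := ⟨fun A h => h.1 rfl⟩

section Helpers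
variable [DecidableEq α] {E : Finset α} {r : Finset α → ℤ}

lemma rk_empty (hr : IsMatroidRankOn E r) : r ∅ = 0 := hr.1.1

lemma rk_mono (hr : IsMatroidRankOn E r) {A B : Finset α} (hAB : A ⊆ B) (hBE : B ⊆ E) :
    r A ≤ r B := hr.1.2.1 A B hAB hBE

lemma rk_nonneg (hr : IsMatroidRankOn E r) {A : Finset α} (hA : A ⊆ E) : 0 ≤ r A := by
  have := rk_mono hr (Finset.empty_subset A) hA
  rw [rk_empty hr] at this; exact this

lemma rk_submod (hr : IsMatroidRankOn E r) {A B : Finset α} (hA : A ⊆ E) (hB : B ⊆ E) :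
    r (A ∪ B) + r (A ∩ B) ≤ r A + r B := hr.1.2.2 A B hA hB

lemma rk_step_le (hr : IsMatroidRankOn E r) {A : Finset α} {g : α} (hA : A ⊆ E) (hg : g ∈ E) :
    r (A ∪ {g}) ≤ r A + 1 := by
  have h1 := rk_submod hr hA (Finset.singleton_subset_iff.2 hg)
  have h2 : r {g} ≤ 1 := hr.2 g hg
  have h3 : 0 ≤ r (A ∩ {g}) := rk_nonneg hr (Finset.inter_subset_left.trans hA)
  omega

lemma rk_le_step (hr : IsMatroidRankOn E r) {A : Finset α} {g : α} (hA : A ⊆ E) (hg : g ∈ E) :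
    r A ≤ r (A ∪ {g}) :=
  rk_mono hr Finset.subset_union_left (Finset.union_subset hA (Finset.singleton_subset_iff.2 hg))

lemma rk_clo (hr : IsMatroidRankOn E r) {A B : Finset α} {g : α} (hAB : A ⊆ B) (hBE : B ⊆ E)
    (hg : g ∈ E) (hcl : r (A ∪ {g}) = r A) : r (B ∪ {g}) = r B := by
  have hgE : ({g} : Finset α) ⊆ E := Finset.singleton_subset_iff.2 hg
  have hAgE : A ∪ {g} ⊆ E := Finset.union_subset (hAB.trans hBE) hgE
  have hsub := rk_submod hr hAgE hBE
  have hU : (A ∪ {g}) ∪ B = B ∪ {g} := by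
    ext x
    simp only [Finset.mem_union, Finset.mem_singleton]
    constructor
    · rintro ((h | h) | h)
      · exact Or.inl (hAB h)
      · exact Or.inr h
      · exact Or.inl h
    · rintro (h | h)
      · exact Or.inr h
      · exact Or.inl (Or.inr h)
  rw [hU] at hsub
  have hmono : r A ≤ r ((A ∪ {g}) ∩ B) :=
    rk_mono hr (Finset.subset_inter Finset.subset_union_left hAB)
      (Finset.inter_subset_right.trans hBE)
  have hle : r B ≤ r (B ∪ {g}) := rk_le_step hr hBE hg
  omega

lemma rk_span (hr : IsMatroidRankOn E r) :
    ∀ (n : ℕ) (A : Finset α), A ⊆ E → (E \ A).card ≤ n →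
      (∀ g ∈ E, g ∉ A → r (A ∪ {g}) = r A) → r E = r A := by
  intro n
  induction n with
  | zero =>
    intro A hAE hcard _
    have hemp : E \ A = ∅ := Finset.card_eq_zero.1 (Nat.le_zero.1 hcard)
    have hEA : E ⊆ A := by
      intro x hx
      by_contra hxA
      have hmem : x ∈ E \ A := Finset.mem_sdiff.2 ⟨hx, hxA⟩
      rw [hemp] at hmem
      exact absurd hmem (Finset.notMem_empty x)
    rw [Finset.Subset.antisymm hEA hAE]
  | succ n ih =>
    intro A hAE hcard hcl
    by_cases hE : E ⊆ A
    · rw [Finset.Subset.antisymm hE hAE]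
    · obtain ⟨g, hgE, hgA⟩ : ∃ g ∈ E, g ∉ A := by
        rcases Finset.not_subset.1 hE with ⟨g, hg1, hg2⟩; exact ⟨g, hg1, hg2⟩
      have hA' : A ∪ {g} ⊆ E := Finset.union_subset hAE (Finset.singleton_subset_iff.2 hgE)
      have hsd : E \ (A ∪ {g}) = (E \ A).erase g := by
        ext x
        simp only [Finset.mem_sdiff, Finset.mem_union, Finset.mem_singleton, Finset.mem_erase]
        tauto
      have hcard' : (E \ (A ∪ {g})).card ≤ n := by
        rw [hsd, Finset.card_erase_of_mem (Finset.mem_sdiff.2 ⟨hgE, hgA⟩)]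
        omega
      have hcl' : ∀ h ∈ E, h ∉ A ∪ {g} → r ((A ∪ {g}) ∪ {h}) = r (A ∪ {g}) := by
        intro h hhE hh
        simp only [Finset.mem_union, Finset.mem_singleton, not_or] at hh
        exact rk_clo hr Finset.subset_union_left hA' hhE (hcl h hhE hh.1)
      have := ih (A ∪ {g}) hA' hcard' hcl'
      rw [this, hcl g hgE hgA]

end Helpers

section GraphHelpers
variable [DecidableEq α] {E : Finset α} {r1 r2 : Finset α → ℤ}
lemma mix_adj_of_ssubset {X Y : {A : Finset α // A ⊆ E ∧ r1 A ≠ r2 A}} (h : X.1 ⊂ Y.1) :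
    (mixingGraph E r1 r2).Adj X Y := by
  show _ ≠ _ ∧ _
  refine ⟨?_, Or.inl (Or.inl h)⟩
  intro he; rw [he] at h; exact ssubset_irrefl _ h

lemma mix_reach_of_subset {X Y : {A : Finset α // A ⊆ E ∧ r1 A ≠ r2 A}} (h : X.1 ⊆ Y.1) :
    (mixingGraph E r1 r2).Reachable X Y := by
  rcases eq_or_ne X.1 Y.1 with he | hne
  · exact (Subtype.ext he) ▸ SimpleGraph.Reachable.refl X
  · exact (mix_adj_of_ssubset (ssubset_of_subset_of_ne h hne)).reachable


variable [DecidableEq α] {E : Finset α} {r1 r2 : Finset α → ℤ}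

lemma mix_maxpos (h1 : IsMatroidRankOn E r1) (h2 : IsMatroidRankOn E r2) :
    ∀ (n : ℕ) (v : {A : Finset α // A ⊆ E ∧ r1 A ≠ r2 A}), (E \ v.1).card ≤ n →
      r2 v.1 < r1 v.1 →
      ∃ B, (mixingGraph E r1 r2).Reachable v B ∧ v.1 ⊆ B.1 ∧ r2 B.1 < r1 B.1 ∧
        ∀ g ∈ E, g ∉ B.1 → r1 (B.1 ∪ {g}) = r2 (B.1 ∪ {g}) := by
  intro n
  induction n with
  | zero =>
    intro v hcard hv
    refine ⟨v, SimpleGraph.Reachable.refl v, subset_rfl, hv, ?_⟩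
    intro g hgE hgv
    exfalso
    have : g ∈ E \ v.1 := Finset.mem_sdiff.2 ⟨hgE, hgv⟩
    have h0 : E \ v.1 = ∅ := Finset.card_eq_zero.1 (Nat.le_zero.1 hcard)
    rw [h0] at this
    exact absurd this (Finset.notMem_empty g)
  | succ n ih =>
    intro v hcard hv
    by_cases hall : ∀ g ∈ E, g ∉ v.1 → r1 (v.1 ∪ {g}) = r2 (v.1 ∪ {g})
    · exact ⟨v, SimpleGraph.Reachable.refl v, subset_rfl, hv, hall⟩
    · push_neg at hall
      obtain ⟨g, hgE, hgv, hne⟩ := hall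
      have hVE : v.1 ⊆ E := v.2.1
      have hV'E : v.1 ∪ {g} ⊆ E :=
        Finset.union_subset hVE (Finset.singleton_subset_iff.2 hgE)
      have hpos : r2 (v.1 ∪ {g}) < r1 (v.1 ∪ {g}) := by
        have a1 := rk_le_step h1 hVE hgE
        have b1 := rk_step_le h2 hVE hgE
        rcases lt_or_ge (r2 (v.1 ∪ {g})) (r1 (v.1 ∪ {g})) with h | h
        · exact h
        · exfalso; apply hne; omega
      set v' : {A : Finset α // A ⊆ E ∧ r1 A ≠ r2 A} := ⟨v.1 ∪ {g}, hV'E, by omega⟩ with hv'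
      have hss : v.1 ⊂ v'.1 := by
        refine Finset.ssubset_iff_of_subset Finset.subset_union_left |>.2 ?_
        exact ⟨g, by simp, hgv⟩
      have hcard' : (E \ v'.1).card ≤ n := by
        have hsd : E \ v'.1 = (E \ v.1).erase g := by
          ext x
          simp only [hv', Finset.mem_sdiff, Finset.mem_union, Finset.mem_singleton,
            Finset.mem_erase]
          tauto
        rw [hsd, Finset.card_erase_of_mem (Finset.mem_sdiff.2 ⟨hgE, hgv⟩)]
        omega
      obtain ⟨B, hreach, hsub, hBpos, hBmax⟩ := ih v' hcard' hpos
      exact ⟨B, ((mix_adj_of_ssubset hss).reachable).trans hreach,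
        (Finset.subset_union_left).trans hsub, hBpos, hBmax⟩

lemma mix_maxpos_struct (h1 : IsMatroidRankOn E r1) (h2 : IsMatroidRankOn E r2)
    (hfE : r1 E = r2 E) {B : Finset α} (hBE : B ⊆ E) (hfB : r2 B < r1 B)
    (hmax : ∀ g ∈ E, g ∉ B → r1 (B ∪ {g}) = r2 (B ∪ {g})) :
    r1 B = r1 E ∧ r1 B = r2 B + 1 ∧ (∀ g ∈ E, g ∉ B → r2 (B ∪ {g}) = r2 B + 1) := by
  have hBne : B ≠ E := by rintro rfl; omega
  have key : ∀ g ∈ E, g ∉ B → r1 (B ∪ {g}) = r1 B ∧ r2 (B ∪ {g}) = r2 B + 1 ∧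
      r1 B = r2 B + 1 := by
    intro g hgE hgB
    have a1 := rk_le_step h1 hBE hgE
    have a2 := rk_step_le h1 hBE hgE
    have b1 := rk_le_step h2 hBE hgE
    have b2 := rk_step_le h2 hBE hgE
    have heq := hmax g hgE hgB
    constructor
    · omega
    · omega
  have hex : ∃ g ∈ E, g ∉ B := by
    rcases Finset.not_subset.1 (fun h => hBne (Finset.Subset.antisymm hBE h)) with ⟨g, h1', h2'⟩
    exact ⟨g, h1', h2'⟩
  obtain ⟨g0, hg0E, hg0B⟩ := hex
  have hfB1 : r1 B = r2 B + 1 := (key g0 hg0E hg0B).2.2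
  have hspan : r1 E = r1 B :=
    rk_span h1 (E \ B).card B hBE le_rfl (fun g hgE hgB => (key g hgE hgB).1)
  exact ⟨hspan.symm, hfB1, fun g hgE hgB => (key g hgE hgB).2.1⟩


variable [DecidableEq α] {E : Finset α} {r1 r2 : Finset α → ℤ}

lemma finset_inter_union_single {A P : Finset α} {g : α} (hgP : g ∈ P) :
    (A ∪ {g}) ∩ P = (A ∩ P) ∪ {g} := by
  ext x
  by_cases hx : x = g
  · subst hx; simp [hgP]
  · simp only [Finset.mem_inter, Finset.mem_union, Finset.mem_singleton, hx, or_false]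

lemma finset_inter_union_single_not {A Q : Finset α} {g : α} (hgQ : g ∉ Q) :
    (A ∪ {g}) ∩ Q = A ∩ Q := by
  ext x
  by_cases hx : x = g
  · subst hx; simp [hgQ]
  · simp only [Finset.mem_inter, Finset.mem_union, Finset.mem_singleton, hx, or_false]

lemma finset_inter_sdiff_single_not {A P : Finset α} {e : α} (heP : e ∉ P) :
    (A \ {e}) ∩ P = A ∩ P := by
  ext x
  by_cases hx : x = e
  · subst hx; simp [heP]
  · simp only [Finset.mem_inter, Finset.mem_sdiff, Finset.mem_singleton, hx,
      not_false_iff, and_true]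

lemma finset_inter_sdiff_single {A Q : Finset α} {e : α} :
    (A \ {e}) ∩ Q = (A ∩ Q) \ {e} := by
  ext x
  simp only [Finset.mem_inter, Finset.mem_sdiff, Finset.mem_singleton]
  tauto

lemma mix_nac (h1 : IsMatroidRankOn E r1) (h2 : IsMatroidRankOn E r2)
    (P Q : Finset α) (hPE : P ⊆ E) (hdisj : Disjoint P Q) (hPQ : P ∪ Q = E)
    (hadd : ∀ X ⊆ E, r2 X = r2 (X ∩ P) + r2 (X ∩ Q))
    (hfP : r2 P + 1 ≤ r1 P)
    (v : {A : Finset α // A ⊆ E ∧ r1 A ≠ r2 A})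
    (Hneg : ∀ Y, (mixingGraph E r1 r2).Reachable v Y → r1 Y.1 < r2 Y.1) : False := by
  have hPne : r1 P ≠ r2 P := by omega
  have vP : {A : Finset α // A ⊆ E ∧ r1 A ≠ r2 A} := ⟨P, hPE, hPne⟩
  suffices aux : ∀ (n : ℕ) (X : {A : Finset α // A ⊆ E ∧ r1 A ≠ r2 A}),
      (mixingGraph E r1 r2).Reachable v X → ((X.1 \ P) ∪ (P \ X.1)).card ≤ n → False by
    exact aux _ v (SimpleGraph.Reachable.refl v) le_rfl
  intro n
  induction n with
  | zero =>
    intro X hreach hcard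
    have h0 : (X.1 \ P) ∪ (P \ X.1) = ∅ := Finset.card_eq_zero.1 (Nat.le_zero.1 hcard)
    have hXP : X.1 = P := by
      apply Finset.Subset.antisymm
      · intro x hx
        by_contra hxP
        have : x ∈ (X.1 \ P) ∪ (P \ X.1) :=
          Finset.mem_union_left _ (Finset.mem_sdiff.2 ⟨hx, hxP⟩)
        rw [h0] at this; exact absurd this (Finset.notMem_empty x)
      · intro x hx
        by_contra hxX
        have : x ∈ (X.1 \ P) ∪ (P \ X.1) :=
          Finset.mem_union_right _ (Finset.mem_sdiff.2 ⟨hx, hxX⟩)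
        rw [h0] at this; exact absurd this (Finset.notMem_empty x)
    have := Hneg X hreach
    rw [hXP] at this; omega
  | succ n ih =>
    intro X hreach hcard
    have hXE : X.1 ⊆ E := X.2.1
    have hneg : r1 X.1 < r2 X.1 := Hneg X hreach
    by_cases hsub : X.1 ⊆ P
    · have hr := (mix_reach_of_subset (Y := ⟨P, hPE, hPne⟩) hsub :
        (mixingGraph E r1 r2).Reachable X ⟨P, hPE, hPne⟩)
      have hPneg : r1 P < r2 P := Hneg _ (hreach.trans hr); omega
    by_cases hsup : P ⊆ X.1
    · have hr := (mix_reach_of_subset (X := ⟨P, hPE, hPne⟩) hsup :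
        (mixingGraph E r1 r2).Reachable ⟨P, hPE, hPne⟩ X)
      have hPneg : r1 P < r2 P := Hneg _ (hreach.trans hr.symm); omega
    obtain ⟨g, hgP, hgX⟩ : ∃ g ∈ P, g ∉ X.1 := by
      rcases Finset.not_subset.1 hsup with ⟨g, h1', h2'⟩; exact ⟨g, h1', h2'⟩
    obtain ⟨e, heX, heP⟩ : ∃ e ∈ X.1, e ∉ P := by
      rcases Finset.not_subset.1 hsub with ⟨e, h1', h2'⟩; exact ⟨e, h1', h2'⟩
    have hgE : g ∈ E := hPE hgP
    have heE : e ∈ E := hXE heX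
    have heQ : e ∈ Q := by
      have : e ∈ P ∪ Q := hPQ ▸ heE
      rcases Finset.mem_union.1 this with h | h
      · exact absurd h heP
      · exact h
    have hgQ : g ∉ Q := Finset.disjoint_left.1 hdisj hgP
    have hge : e ≠ g := fun h => heP (h ▸ hgP)
    have hX1E : X.1 ∪ {g} ⊆ E := Finset.union_subset hXE (Finset.singleton_subset_iff.2 hgE)
    have hX2X : X.1 \ {e} ⊆ X.1 := Finset.sdiff_subset
    have hX2E : X.1 \ {e} ⊆ E := hX2X.trans hXE
    have hYE : (X.1 \ {e}) ∪ {g} ⊆ E :=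
      Finset.union_subset hX2E (Finset.singleton_subset_iff.2 hgE)
    -- distance computations
    have hdisj2 : Disjoint (X.1 \ P) (P \ X.1) := by
      rw [Finset.disjoint_left]
      intro x hx1 hx2
      exact (Finset.mem_sdiff.1 hx2).2 (Finset.mem_sdiff.1 hx1).1
    have hdcard : (X.1 \ P).card + (P \ X.1).card ≤ n + 1 := by
      rw [← Finset.card_union_of_disjoint hdisj2]; exact hcard
    have hd1 : (((X.1 ∪ {g}) \ P) ∪ (P \ (X.1 ∪ {g}))).card ≤ n := by
      have e1 : (X.1 ∪ {g}) \ P = X.1 \ P := by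
        ext x
        by_cases hx : x = g
        · subst hx; simp [hgP]
        · simp [hx]
      have e2 : P \ (X.1 ∪ {g}) = (P \ X.1).erase g := by
        ext x
        by_cases hx : x = g
        · subst hx; simp
        · simp [hx]
      have hdj : Disjoint ((X.1 ∪ {g}) \ P) (P \ (X.1 ∪ {g})) := by
        rw [Finset.disjoint_left]
        intro x hx1 hx2
        exact (Finset.mem_sdiff.1 hx2).2 (Finset.mem_sdiff.1 hx1).1
      rw [Finset.card_union_of_disjoint hdj, e1, e2,
        Finset.card_erase_of_mem (Finset.mem_sdiff.2 ⟨hgP, hgX⟩)]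
      have : 1 ≤ (P \ X.1).card := Finset.card_pos.2 ⟨g, Finset.mem_sdiff.2 ⟨hgP, hgX⟩⟩
      omega
    have hd2 : (((X.1 \ {e}) \ P) ∪ (P \ (X.1 \ {e}))).card ≤ n := by
      have e1 : (X.1 \ {e}) \ P = (X.1 \ P).erase e := by
        ext x
        by_cases hx : x = e
        · subst hx; simp
        · simp [hx]
      have e2 : P \ (X.1 \ {e}) = P \ X.1 := by
        ext x
        by_cases hx : x = e
        · subst hx; simp [heP]
        · simp [hx]
      have hdj : Disjoint ((X.1 \ {e}) \ P) (P \ (X.1 \ {e})) := by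
        rw [Finset.disjoint_left]
        intro x hx1 hx2
        exact (Finset.mem_sdiff.1 hx2).2 (Finset.mem_sdiff.1 hx1).1
      rw [Finset.card_union_of_disjoint hdj, e1, e2,
        Finset.card_erase_of_mem (Finset.mem_sdiff.2 ⟨heX, heP⟩)]
      have : 1 ≤ (X.1 \ P).card := Finset.card_pos.2 ⟨e, Finset.mem_sdiff.2 ⟨heX, heP⟩⟩
      omega
    -- the two corners are not vertices
    have h0X1 : r1 (X.1 ∪ {g}) = r2 (X.1 ∪ {g}) := by
      by_contra hne
      have hss : X.1 ⊂ X.1 ∪ {g} := by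
        refine Finset.ssubset_iff_of_subset Finset.subset_union_left |>.2 ?_
        exact ⟨g, by simp, hgX⟩
      exact ih ⟨X.1 ∪ {g}, hX1E, hne⟩ (hreach.trans (mix_adj_of_ssubset hss).reachable) hd1
    have h0X2 : r1 (X.1 \ {e}) = r2 (X.1 \ {e}) := by
      by_contra hne
      have hss : X.1 \ {e} ⊂ X.1 := by
        refine Finset.ssubset_iff_of_subset hX2X |>.2 ?_
        exact ⟨e, heX, by simp⟩
      exact ih ⟨X.1 \ {e}, hX2E, hne⟩
        (hreach.trans ((mix_adj_of_ssubset (Y := X) hss).reachable).symm) hd2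
    -- numeric step facts
    have a1 := rk_le_step h1 hXE hgE
    have a2 := rk_step_le h1 hXE hgE
    have b1 := rk_le_step h2 hXE hgE
    have b2 := rk_step_le h2 hXE hgE
    have hX2e : (X.1 \ {e}) ∪ {e} = X.1 := by
      rw [Finset.sdiff_union_self_eq_union]
      exact Finset.union_eq_left.2 (Finset.singleton_subset_iff.2 heX)
    have a3 : r1 X.1 ≤ r1 (X.1 \ {e}) + 1 := by
      have := rk_step_le h1 hX2E heE; rw [hX2e] at this; exact this
    have a4 : r1 (X.1 \ {e}) ≤ r1 X.1 := rk_mono h1 hX2X hXE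
    have b3 : r2 X.1 ≤ r2 (X.1 \ {e}) + 1 := by
      have := rk_step_le h2 hX2E heE; rw [hX2e] at this; exact this
    have b4 : r2 (X.1 \ {e}) ≤ r2 X.1 := rk_mono h2 hX2X hXE
    have hr1X1 : r1 (X.1 ∪ {g}) = r1 X.1 + 1 := by omega
    have hr2X1 : r2 (X.1 ∪ {g}) = r2 X.1 := by omega
    have hr1X2 : r1 (X.1 \ {e}) = r1 X.1 := by omega
    have hr2X2 : r2 (X.1 \ {e}) = r2 X.1 - 1 := by omega
    have hfX : r2 X.1 = r1 X.1 + 1 := by omega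
    -- splits
    have s0 := hadd X.1 hXE
    have s1 := hadd (X.1 ∪ {g}) hX1E
    have s2 := hadd (X.1 \ {e}) hX2E
    have s3 := hadd ((X.1 \ {e}) ∪ {g}) hYE
    rw [finset_inter_union_single hgP, finset_inter_union_single_not hgQ] at s1
    rw [finset_inter_sdiff_single_not heP, finset_inter_sdiff_single] at s2
    rw [finset_inter_union_single hgP, finset_inter_union_single_not hgQ,
      finset_inter_sdiff_single_not heP, finset_inter_sdiff_single] at s3
    have hr2Y : r2 ((X.1 \ {e}) ∪ {g}) = r2 X.1 - 1 := by omega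
    -- r1 Y = r1 X + 1
    have hr1Ya : r1 ((X.1 \ {e}) ∪ {g}) ≤ r1 X.1 + 1 := by
      have h : r1 ((X.1 \ {e}) ∪ {g}) ≤ r1 (X.1 ∪ {g}) :=
        rk_mono h1 (Finset.union_subset_union_left hX2X) hX1E
      omega
    have hr1Yb : r1 X.1 ≤ r1 ((X.1 \ {e}) ∪ {g}) := by
      have h : r1 (X.1 \ {e}) ≤ r1 ((X.1 \ {e}) ∪ {g}) :=
        rk_mono h1 Finset.subset_union_left hYE
      omega
    have hr1Y : r1 ((X.1 \ {e}) ∪ {g}) = r1 X.1 + 1 := by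
      rcases eq_or_lt_of_le hr1Yb with heq | hlt
      · exfalso
        have hclo : r1 ((X.1 \ {e}) ∪ {g}) = r1 (X.1 \ {e}) := by omega
        have hcc := rk_clo h1 hX2X hXE hgE hclo
        omega
      · omega
    have hfY : r1 ((X.1 \ {e}) ∪ {g}) = r2 ((X.1 \ {e}) ∪ {g}) + 1 := by omega
    -- Y is a positive vertex adjacent to X
    have hXY : X.1 ≠ (X.1 \ {e}) ∪ {g} := by
      intro h
      have : e ∈ (X.1 \ {e}) ∪ {g} := h ▸ heX
      simp [hge] at this
    have hXinterY : X.1 ∩ ((X.1 \ {e}) ∪ {g}) = X.1 \ {e} := by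
      ext x
      by_cases hx : x = g
      · subst hx; simp [hgX]
      · by_cases hx2 : x = e
        · subst hx2; simp [hge]
        · simp [hx, hx2]
    have hXunionY : X.1 ∪ ((X.1 \ {e}) ∪ {g}) = X.1 ∪ {g} := by
      ext x
      by_cases hx : x = g
      · subst hx; simp
      · by_cases hx2 : x = e
        · subst hx2; simp [heX]
        · simp [hx, hx2]
    have hsd1 : X.1 \ ((X.1 \ {e}) ∪ {g}) = {e} := by
      ext x
      simp only [Finset.mem_sdiff, Finset.mem_union, Finset.mem_singleton]
      constructor
      · rintro ⟨hxX, hnot⟩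
        by_contra hxe
        exact hnot (Or.inl ⟨hxX, hxe⟩)
      · rintro rfl
        refine ⟨heX, ?_⟩
        rintro (⟨-, h⟩ | h)
        · exact h rfl
        · exact hge h
    have hsd2 : ((X.1 \ {e}) ∪ {g}) \ X.1 = {g} := by
      ext x
      simp only [Finset.mem_sdiff, Finset.mem_union, Finset.mem_singleton]
      constructor
      · rintro ⟨⟨hx1, -⟩ | hx2, hnX⟩
        · exact absurd hx1 hnX
        · exact hx2
      · rintro rfl
        exact ⟨Or.inr rfl, hgX⟩
    have hadj : (mixingGraph E r1 r2).Adj X ⟨(X.1 \ {e}) ∪ {g}, hYE, by omega⟩ := by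
      show _ ≠ _ ∧ _
      refine ⟨?_, Or.inr ⟨?_, ?_, ?_⟩⟩
      · intro h
        exact hXY (congrArg Subtype.val h)
      · show r1 (X.1 ∩ ((X.1 \ {e}) ∪ {g})) = r2 (X.1 ∩ ((X.1 \ {e}) ∪ {g}))
        rw [hXinterY]; exact h0X2
      · show r1 (X.1 ∪ ((X.1 \ {e}) ∪ {g})) = r2 (X.1 ∪ ((X.1 \ {e}) ∪ {g}))
        rw [hXunionY]; exact h0X1
      · show ((X.1 \ ((X.1 \ {e}) ∪ {g})) ∪ (((X.1 \ {e}) ∪ {g}) \ X.1)).card = 2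
        rw [hsd1, hsd2,
          Finset.card_union_of_disjoint (by simp; exact fun h => hge h)]
        simp
    have hfin : r1 ((X.1 \ {e}) ∪ {g}) < r2 ((X.1 \ {e}) ∪ {g}) :=
      Hneg _ (hreach.trans hadj.reachable)
    omega


variable [DecidableEq α] {E : Finset α} {r1 r2 : Finset α → ℤ}

lemma mix_final (h1 : IsMatroidRankOn E r1) (h2 : IsMatroidRankOn E r2)
    (P Q : Finset α) (hPne : P.Nonempty) (hQne : Q.Nonempty)
    (hdisj : Disjoint P Q) (hPQ : P ∪ Q = E)
    (hadd : ∀ X ⊆ E, r2 X = r2 (X ∩ P) + r2 (X ∩ Q))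
    (hfE : r1 E = r2 E)
    (hsum : r1 E + 1 ≤ r1 P + r1 Q)
    (v B : {A : Finset α // A ⊆ E ∧ r1 A ≠ r2 A})
    (hreach : (mixingGraph E r1 r2).Reachable v B)
    (hnP : ∀ Y, (mixingGraph E r1 r2).Reachable v Y → Y.1 ≠ P)
    (hnQ : ∀ Y, (mixingGraph E r1 r2).Reachable v Y → Y.1 ≠ Q)
    (hPB : P ⊆ B.1) (hr1B : r1 B.1 = r1 E) (hfB : r1 B.1 = r2 B.1 + 1) : False := by
  have hPE : P ⊆ E := by rw [← hPQ]; exact Finset.subset_union_left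
  have hQE : Q ⊆ E := by rw [← hPQ]; exact Finset.subset_union_right
  have hEP : E ∩ P = P := Finset.inter_eq_right.2 hPE
  have hEQ : E ∩ Q = Q := Finset.inter_eq_right.2 hQE
  have hEsplit : r2 E = r2 P + r2 Q := by
    have := hadd E subset_rfl; rwa [hEP, hEQ] at this
  -- P itself is not a vertex
  have hPneB : P ≠ B.1 := fun h => hnP B hreach h.symm
  have hPssB : P ⊂ B.1 := ssubset_of_subset_of_ne hPB hPneB
  have hfP : r1 P = r2 P := by
    by_contra hne
    have hadj := mix_adj_of_ssubset (X := ⟨P, hPE, hne⟩) (Y := B) hPssB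
    exact hnP ⟨P, hPE, hne⟩ (hreach.trans hadj.symm.reachable) rfl
  have hfQpos : r2 Q + 1 ≤ r1 Q := by omega
  have hQvx : r1 Q ≠ r2 Q := by omega
  -- walk up from Q
  obtain ⟨B', hreachQ, hQB', hB'pos, hB'max⟩ :=
    mix_maxpos h1 h2 (E \ Q).card ⟨Q, hQE, hQvx⟩ le_rfl (by show r2 Q < r1 Q; omega)
  obtain ⟨hr1B', hfB', hstep'⟩ := mix_maxpos_struct h1 h2 hfE B'.2.1 hB'pos hB'max
  have hQB'1 : Q ⊆ B'.1 := hQB'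
  -- rank values
  have hr2B : r2 B.1 = r2 E - 1 := by omega
  have hr2B' : r2 B'.1 = r2 E - 1 := by omega
  have hBP : B.1 ∩ P = P := Finset.inter_eq_right.2 hPB
  have hB'Q : B'.1 ∩ Q = Q := Finset.inter_eq_right.2 hQB'1
  have hsplitB := hadd B.1 B.2.1
  have hsplitB' := hadd B'.1 B'.2.1
  rw [hBP] at hsplitB
  rw [hB'Q] at hsplitB'
  have hr2K : r2 (B.1 ∩ Q) = r2 Q - 1 := by omega
  have hr2K' : r2 (B'.1 ∩ P) = r2 P - 1 := by omega
  have hKQ : B.1 ∩ Q ⊆ Q := Finset.inter_subset_right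
  have hK'P : B'.1 ∩ P ⊆ P := Finset.inter_subset_right
  have hKE : B.1 ∩ Q ⊆ E := hKQ.trans hQE
  have hK'E : B'.1 ∩ P ⊆ E := hK'P.trans hPE
  have hKneQ : B.1 ∩ Q ≠ Q := fun h => by rw [h] at hr2K; omega
  have hK'neP : B'.1 ∩ P ≠ P := fun h => by rw [h] at hr2K'; omega
  have hKB : B.1 ∩ Q ⊆ B.1 := Finset.inter_subset_left
  have hK'B' : B'.1 ∩ P ⊆ B'.1 := Finset.inter_subset_left
  have hK'B : B'.1 ∩ P ⊆ B.1 := hK'P.trans hPB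
  have hKB' : B.1 ∩ Q ⊆ B'.1 := hKQ.trans hQB'1
  obtain ⟨p0, hp0P⟩ := hPne
  have hp0B : p0 ∈ B.1 := hPB hp0P
  have hp0nQ : p0 ∉ Q := Finset.disjoint_left.1 hdisj hp0P
  obtain ⟨q0, hq0Q⟩ := hQne
  have hq0B' : q0 ∈ B'.1 := hQB'1 hq0Q
  have hq0nP : q0 ∉ P := Finset.disjoint_right.1 hdisj hq0Q
  -- K is not a vertex
  have hfK : r1 (B.1 ∩ Q) = r2 (B.1 ∩ Q) := by
    by_contra hne
    have hKssB : B.1 ∩ Q ⊂ B.1 := by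
      refine ssubset_of_subset_of_ne hKB ?_
      intro h
      have : p0 ∈ B.1 ∩ Q := h.symm ▸ hp0B
      exact hp0nQ (Finset.mem_inter.1 this).2
    have hKssQ : B.1 ∩ Q ⊂ Q := ssubset_of_subset_of_ne hKQ hKneQ
    have hadj1 := mix_adj_of_ssubset (X := ⟨B.1 ∩ Q, hKE, hne⟩) (Y := B) hKssB
    have hadj2 := mix_adj_of_ssubset (X := ⟨B.1 ∩ Q, hKE, hne⟩) (Y := ⟨Q, hQE, hQvx⟩) hKssQ
    exact hnQ ⟨Q, hQE, hQvx⟩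
      ((hreach.trans hadj1.symm.reachable).trans hadj2.reachable) rfl
  -- K' is not a vertex
  have hfK' : r1 (B'.1 ∩ P) = r2 (B'.1 ∩ P) := by
    by_contra hne
    have hK'ssB : B'.1 ∩ P ⊂ B.1 := lt_of_le_of_lt hK'P hPssB
    have hK'ssB' : B'.1 ∩ P ⊂ B'.1 := by
      refine ssubset_of_subset_of_ne hK'B' ?_
      intro h
      have : q0 ∈ B'.1 ∩ P := h.symm ▸ hq0B'
      exact hq0nP (Finset.mem_inter.1 this).2
    have hadj1 := mix_adj_of_ssubset (X := ⟨B'.1 ∩ P, hK'E, hne⟩) (Y := B) hK'ssB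
    have hadj2 := mix_adj_of_ssubset (X := ⟨B'.1 ∩ P, hK'E, hne⟩) (Y := B') hK'ssB'
    exact hnQ ⟨Q, hQE, hQvx⟩
      (((hreach.trans hadj1.symm.reachable).trans hadj2.reachable).trans hreachQ.symm) rfl
  -- K ∪ K' is not a vertex
  have hWE : (B.1 ∩ Q) ∪ (B'.1 ∩ P) ⊆ E := Finset.union_subset hKE hK'E
  have hWB : (B.1 ∩ Q) ∪ (B'.1 ∩ P) ⊆ B.1 := Finset.union_subset hKB hK'B
  have hWB' : (B.1 ∩ Q) ∪ (B'.1 ∩ P) ⊆ B'.1 := Finset.union_subset hKB' hK'B'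
  obtain ⟨p1, hp1P, hp1nK'⟩ : ∃ p ∈ P, p ∉ B'.1 ∩ P := by
    rcases Finset.not_subset.1 (fun h => hK'neP (Finset.Subset.antisymm hK'P h)) with ⟨p, h1', h2'⟩
    exact ⟨p, h1', h2'⟩
  obtain ⟨q1, hq1Q, hq1nK⟩ : ∃ q ∈ Q, q ∉ B.1 ∩ Q := by
    rcases Finset.not_subset.1 (fun h => hKneQ (Finset.Subset.antisymm hKQ h)) with ⟨q, h1', h2'⟩
    exact ⟨q, h1', h2'⟩
  have hfW : r1 ((B.1 ∩ Q) ∪ (B'.1 ∩ P)) = r2 ((B.1 ∩ Q) ∪ (B'.1 ∩ P)) := by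
    by_contra hne
    have hWssB : (B.1 ∩ Q) ∪ (B'.1 ∩ P) ⊂ B.1 := by
      refine ssubset_of_subset_of_ne hWB ?_
      intro h
      have : p1 ∈ (B.1 ∩ Q) ∪ (B'.1 ∩ P) := h.symm ▸ hPB hp1P
      rcases Finset.mem_union.1 this with h' | h'
      · exact (Finset.disjoint_left.1 hdisj hp1P) (Finset.mem_inter.1 h').2
      · exact hp1nK' h'
    have hWssB' : (B.1 ∩ Q) ∪ (B'.1 ∩ P) ⊂ B'.1 := by
      refine ssubset_of_subset_of_ne hWB' ?_
      intro h
      have : q1 ∈ (B.1 ∩ Q) ∪ (B'.1 ∩ P) := h.symm ▸ hQB'1 hq1Q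
      rcases Finset.mem_union.1 this with h' | h'
      · exact hq1nK h'
      · exact (Finset.disjoint_right.1 hdisj hq1Q) (Finset.mem_inter.1 h').2
    have hadj1 := mix_adj_of_ssubset (X := ⟨_, hWE, hne⟩) (Y := B) hWssB
    have hadj2 := mix_adj_of_ssubset (X := ⟨_, hWE, hne⟩) (Y := B') hWssB'
    exact hnQ ⟨Q, hQE, hQvx⟩
      (((hreach.trans hadj1.symm.reachable).trans hadj2.reachable).trans hreachQ.symm) rfl
  -- split of K ∪ K'
  have hWsplit := hadd _ hWE
  have hWP : ((B.1 ∩ Q) ∪ (B'.1 ∩ P)) ∩ P = B'.1 ∩ P := by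
    ext x
    simp only [Finset.mem_inter, Finset.mem_union]
    constructor
    · rintro ⟨⟨hx1, hx2⟩ | ⟨hx1, hx2⟩, hxP⟩
      · exact absurd hxP (Finset.disjoint_right.1 hdisj hx2)
      · exact ⟨hx1, hx2⟩
    · rintro ⟨hx1, hx2⟩
      exact ⟨Or.inr ⟨hx1, hx2⟩, hx2⟩
  have hWQ : ((B.1 ∩ Q) ∪ (B'.1 ∩ P)) ∩ Q = B.1 ∩ Q := by
    ext x
    simp only [Finset.mem_inter, Finset.mem_union]
    constructor
    · rintro ⟨⟨hx1, hx2⟩ | ⟨hx1, hx2⟩, hxQ⟩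
      · exact ⟨hx1, hx2⟩
      · exact absurd hxQ (Finset.disjoint_left.1 hdisj hx2)
    · rintro ⟨hx1, hx2⟩
      exact ⟨Or.inl ⟨hx1, hx2⟩, hx2⟩
  rw [hWP, hWQ] at hWsplit
  -- the submodularity contradiction
  have hsub := rk_submod h1 hPE hWE
  have hU : P ∪ ((B.1 ∩ Q) ∪ (B'.1 ∩ P)) = B.1 := by
    apply Finset.Subset.antisymm
    · exact Finset.union_subset hPB hWB
    · intro x hx
      have hxE : x ∈ E := B.2.1 hx
      rcases Finset.mem_union.1 (hPQ ▸ hxE) with h | h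
      · exact Finset.mem_union_left _ h
      · exact Finset.mem_union_right _ (Finset.mem_union_left _ (Finset.mem_inter.2 ⟨hx, h⟩))
  have hI : P ∩ ((B.1 ∩ Q) ∪ (B'.1 ∩ P)) = B'.1 ∩ P := by
    ext x
    simp only [Finset.mem_inter, Finset.mem_union]
    constructor
    · rintro ⟨hxP, ⟨hx1, hx2⟩ | ⟨hx1, hx2⟩⟩
      · exact absurd hxP (Finset.disjoint_right.1 hdisj hx2)
      · exact ⟨hx1, hx2⟩
    · rintro ⟨hx1, hx2⟩
      exact ⟨hx2, Or.inr ⟨hx1, hx2⟩⟩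
  rw [hU, hI] at hsub
  omega


variable [DecidableEq α] {E : Finset α} {r1 r2 : Finset α → ℤ}

lemma conn_sum (h1 : IsMatroidRankOn E r1) (hconn1 : MatroidConnectedOn E r1)
    {P Q : Finset α} (hPne : P.Nonempty) (hQne : Q.Nonempty)
    (hdisj : Disjoint P Q) (hPQ : P ∪ Q = E) :
    r1 E + 1 ≤ r1 P + r1 Q := by
  have hPE : P ⊆ E := by rw [← hPQ]; exact Finset.subset_union_left
  have hQE : Q ⊆ E := by rw [← hPQ]; exact Finset.subset_union_right
  have hQeq : ∀ X : Finset α, X ⊆ E → X \ P = X ∩ Q := by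
    intro X hXE
    ext x
    simp only [Finset.mem_sdiff, Finset.mem_inter]
    constructor
    · rintro ⟨hx1, hx2⟩
      refine ⟨hx1, ?_⟩
      rcases Finset.mem_union.1 (hPQ ▸ hXE hx1) with h | h
      · exact absurd h hx2
      · exact h
    · rintro ⟨hx1, hx2⟩
      exact ⟨hx1, fun h => (Finset.disjoint_left.1 hdisj h) hx2⟩
  by_contra hle
  push_neg at hle
  have hPiQ : P ∩ Q = ∅ := Finset.disjoint_iff_inter_eq_empty.1 hdisj
  have hs := rk_submod h1 hPE hQE
  rw [hPQ, hPiQ, rk_empty h1] at hs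
  have heq : r1 P + r1 Q = r1 E := by omega
  have hsplit : ∀ X ⊆ E, r1 X = r1 (X ∩ P) + r1 (X \ P) := by
    intro X hXE
    have hXPE : X ∩ P ⊆ E := Finset.inter_subset_left.trans hXE
    have hXQE : X \ P ⊆ E := Finset.sdiff_subset.trans hXE
    -- ≤ direction
    have hle1 : r1 X ≤ r1 (X ∩ P) + r1 (X \ P) := by
      have hs1 := rk_submod h1 hXPE hXQE
      have hU : (X ∩ P) ∪ (X \ P) = X := by
        ext x
        simp only [Finset.mem_union, Finset.mem_inter, Finset.mem_sdiff]
        tauto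
      have hI : (X ∩ P) ∩ (X \ P) = ∅ := by
        ext x
        simp only [Finset.mem_inter, Finset.mem_sdiff, Finset.notMem_empty, iff_false]
        tauto
      rw [hU, hI, rk_empty h1] at hs1
      have := rk_nonneg h1 hXE
      omega
    -- ≥ direction
    have hs2 := rk_submod h1 hXE hPE
    have hXPuE : X ∪ P ⊆ E := Finset.union_subset hXE hPE
    have hs3 := rk_submod h1 hXPuE hQE
    have hU2 : (X ∪ P) ∪ Q = E := by
      apply Finset.Subset.antisymm
      · exact Finset.union_subset hXPuE hQE
      · rw [← hPQ]
        intro x hx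
        rcases Finset.mem_union.1 hx with h | h
        · exact Finset.mem_union_left _ (Finset.mem_union_right _ h)
        · exact Finset.mem_union_right _ h
    have hI2 : (X ∪ P) ∩ Q = X \ P := by
      rw [hQeq X hXE]
      ext x
      simp only [Finset.mem_inter, Finset.mem_union]
      constructor
      · rintro ⟨hx1 | hx1, hx2⟩
        · exact ⟨hx1, hx2⟩
        · exact absurd hx2 (Finset.disjoint_left.1 hdisj hx1)
      · rintro ⟨hx1, hx2⟩
        exact ⟨Or.inl hx1, hx2⟩
    rw [hU2, hI2] at hs3
    omega
  rcases hconn1.2 P hPE hsplit with h | h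
  · exact absurd h (Finset.nonempty_iff_ne_empty.1 hPne)
  · rw [h] at hdisj
    have := Finset.disjoint_left.1 hdisj (hQE hQne.choose_spec) hQne.choose_spec
    exact this

lemma mix_main_aux (h1 : IsMatroidRankOn E r1) (h2 : IsMatroidRankOn E r2)
    (hconn1 : MatroidConnectedOn E r1)
    (P Q : Finset α) (hPne : P.Nonempty) (hQne : Q.Nonempty)
    (hdisj : Disjoint P Q) (hPQ : P ∪ Q = E)
    (hadd : ∀ X ⊆ E, r2 X = r2 (X ∩ P) + r2 (X ∩ Q))
    (hfE : r1 E = r2 E)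
    (v : {A : Finset α // A ⊆ E ∧ r1 A ≠ r2 A})
    (hnP : ∀ Y, (mixingGraph E r1 r2).Reachable v Y → Y.1 ≠ P)
    (hnQ : ∀ Y, (mixingGraph E r1 r2).Reachable v Y → Y.1 ≠ Q) : False := by
  have hPE : P ⊆ E := by rw [← hPQ]; exact Finset.subset_union_left
  have hQE : Q ⊆ E := by rw [← hPQ]; exact Finset.subset_union_right
  have hsum : r1 E + 1 ≤ r1 P + r1 Q := conn_sum h1 hconn1 hPne hQne hdisj hPQ
  have hEsplit : r2 E = r2 P + r2 Q := by
    have := hadd E subset_rfl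
    rwa [Finset.inter_eq_right.2 hPE, Finset.inter_eq_right.2 hQE] at this
  have hadd' : ∀ X ⊆ E, r2 X = r2 (X ∩ Q) + r2 (X ∩ P) := by
    intro X hX; rw [hadd X hX]; ring
  have hPQ' : Q ∪ P = E := by rw [Finset.union_comm]; exact hPQ
  by_cases hpos : ∃ Y, (mixingGraph E r1 r2).Reachable v Y ∧ r2 Y.1 < r1 Y.1
  · obtain ⟨Y, hYreach, hYpos⟩ := hpos
    obtain ⟨B, hYB, hYsubB, hBpos, hBmax⟩ :=
      mix_maxpos h1 h2 (E \ Y.1).card Y le_rfl hYpos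
    have hreach : (mixingGraph E r1 r2).Reachable v B := hYreach.trans hYB
    obtain ⟨hr1B, hfB, hstep⟩ := mix_maxpos_struct h1 h2 hfE B.2.1 hBpos hBmax
    have hr2B : r2 B.1 = r2 E - 1 := by omega
    have hsplitB := hadd B.1 B.2.1
    have hmono1 : r2 (B.1 ∩ P) ≤ r2 P :=
      rk_mono h2 Finset.inter_subset_right hPE
    have hmono2 : r2 (B.1 ∩ Q) ≤ r2 Q :=
      rk_mono h2 Finset.inter_subset_right hQE
    by_cases hcase : r2 (B.1 ∩ P) = r2 P
    · -- P-side full: P ⊆ B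
      have hPB : P ⊆ B.1 := by
        intro p hp
        by_contra hpB
        have hpE : p ∈ E := hPE hp
        have hstepp := hstep p hpE hpB
        have hsplitp := hadd (B.1 ∪ {p}) (Finset.union_subset B.2.1
          (Finset.singleton_subset_iff.2 hpE))
        rw [finset_inter_union_single hp,
          finset_inter_union_single_not (Finset.disjoint_left.1 hdisj hp)] at hsplitp
        have hmono3 : r2 ((B.1 ∩ P) ∪ {p}) ≤ r2 P :=
          rk_mono h2 (Finset.union_subset Finset.inter_subset_right
            (Finset.singleton_subset_iff.2 hp)) hPE
        omega
      exact mix_final h1 h2 P Q hPne hQne hdisj hPQ hadd hfE hsum v B hreach hnP hnQ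
        hPB hr1B hfB
    · -- Q-side full: Q ⊆ B
      have hcase2 : r2 (B.1 ∩ Q) = r2 Q := by omega
      have hQB : Q ⊆ B.1 := by
        intro q hq
        by_contra hqB
        have hqE : q ∈ E := hQE hq
        have hstepq := hstep q hqE hqB
        have hsplitq := hadd (B.1 ∪ {q}) (Finset.union_subset B.2.1
          (Finset.singleton_subset_iff.2 hqE))
        rw [finset_inter_union_single hq,
          finset_inter_union_single_not (Finset.disjoint_right.1 hdisj hq)] at hsplitq
        have hmono3 : r2 ((B.1 ∩ Q) ∪ {q}) ≤ r2 Q :=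
          rk_mono h2 (Finset.union_subset Finset.inter_subset_right
            (Finset.singleton_subset_iff.2 hq)) hQE
        omega
      exact mix_final h1 h2 Q P hQne hPne hdisj.symm hPQ' hadd' hfE (by omega) v B hreach
        hnQ hnP hQB hr1B hfB
  · push_neg at hpos
    have hneg : ∀ Y, (mixingGraph E r1 r2).Reachable v Y → r1 Y.1 < r2 Y.1 := by
      intro Y hY
      have h := hpos Y hY
      rcases lt_or_gt_of_ne Y.2.2 with h' | h'
      · exact h'
      · exact absurd h' (not_lt.2 (le_of_not_gt (fun hc => absurd hc (by omega))))
    rcases (by omega : r2 P + 1 ≤ r1 P ∨ r2 Q + 1 ≤ r1 Q) with hfP | hfQ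
    · exact mix_nac h1 h2 P Q hPE hdisj hPQ hadd hfP v hneg
    · exact mix_nac h1 h2 Q P hQE hdisj.symm hPQ' hadd' hfQ v hneg

end GraphHelpers

/-- If `M₁` is connected and `M₂` has exactly two connected components, then the
mixing graph has at most two connected components (among any three vertices, two are
in the same component). -/
theorem stmt10 [DecidableEq α] (E : Finset α) (r1 r2 : Finset α → ℤ)
    (h1 : IsMatroidRankOn E r1) (h2 : IsMatroidRankOn E r2)
    (hconn1 : MatroidConnectedOn E r1)
    (P Q : Finset α) (hP : P.Nonempty) (hQ : Q.Nonempty)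
    (hdisj : Disjoint P Q) (hPQ : P ∪ Q = E)
    (hconnP : MatroidConnectedOn P r2) (hconnQ : MatroidConnectedOn Q r2)
    (hadd : ∀ X ⊆ E, r2 X = r2 (X ∩ P) + r2 (X ∩ Q)) :
    ∀ A B C : {A : Finset α // A ⊆ E ∧ r1 A ≠ r2 A},
      (mixingGraph E r1 r2).Reachable A B ∨
      (mixingGraph E r1 r2).Reachable A C ∨
      (mixingGraph E r1 r2).Reachable B C := by
  intro A B C
  by_cases hfE : r1 E = r2 E
  · -- every component contains P or Q
    have key : ∀ v : {A : Finset α // A ⊆ E ∧ r1 A ≠ r2 A},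
        ∃ T, (T.1 = P ∨ T.1 = Q) ∧ (mixingGraph E r1 r2).Reachable v T := by
      intro v
      by_contra hcon
      push_neg at hcon
      refine mix_main_aux h1 h2 hconn1 P Q hP hQ hdisj hPQ hadd hfE v ?_ ?_
      · intro Y hY hYP
        exact hcon Y (Or.inl hYP) hY
      · intro Y hY hYQ
        exact hcon Y (Or.inr hYQ) hY
    obtain ⟨TA, hTA, rA⟩ := key A
    obtain ⟨TB, hTB, rB⟩ := key B
    obtain ⟨TC, hTC, rC⟩ := key C
    have pair : ∀ (x y Tx Ty : {A : Finset α // A ⊆ E ∧ r1 A ≠ r2 A}),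
        (mixingGraph E r1 r2).Reachable x Tx → (mixingGraph E r1 r2).Reachable y Ty →
        Tx.1 = Ty.1 → (mixingGraph E r1 r2).Reachable x y := by
      intro x y Tx Ty hx hy he
      have heq : Tx = Ty := Subtype.ext he
      subst heq
      exact hx.trans hy.symm
    rcases hTA with hA | hA <;> rcases hTB with hB | hB <;> rcases hTC with hC | hC
    · exact Or.inl (pair A B TA TB rA rB (hA.trans hB.symm))
    · exact Or.inl (pair A B TA TB rA rB (hA.trans hB.symm))
    · exact Or.inr (Or.inl (pair A C TA TC rA rC (hA.trans hC.symm)))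
    · exact Or.inr (Or.inr (pair B C TB TC rB rC (hB.trans hC.symm)))
    · exact Or.inr (Or.inr (pair B C TB TC rB rC (hB.trans hC.symm)))
    · exact Or.inr (Or.inl (pair A C TA TC rA rC (hA.trans hC.symm)))
    · exact Or.inl (pair A B TA TB rA rB (hA.trans hB.symm))
    · exact Or.inl (pair A B TA TB rA rB (hA.trans hB.symm))
  · have reachTop : ∀ X : {A : Finset α // A ⊆ E ∧ r1 A ≠ r2 A},
        (mixingGraph E r1 r2).Reachable X ⟨E, subset_rfl, hfE⟩ :=
      fun X => mix_reach_of_subset X.2.1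
    exact Or.inl ((reachTop A).trans (reachTop B).symm)
end

section
/- Let ρ be an i-polymatroid on a finite set E with i-dual ρ*, and let k be an integer with k ≥ i. Then ρ is k-decomposable if and only if ρ* is k-decomposable. Consequently, if neither ρ nor ρ* is k′-decomposable for any positive integer k′ < i, then the least k for which ρ is k-decomposable equals the least k for which ρ* is k-decomposable (with both being nonexistent simultaneously if either is). -/
variable {α : Type*}

/-- The `i`-dual of an `i`-polymatroid on `E`. -/
def IDual [DecidableEq α] (i : ℕ) (E : Finset α) (ρ : Finset α → ℤ) :
    Finset α → ℤ :=
  fun X => (i : ℤ) * X.card - ρ E + ρ (E \ X)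

section Aux
variable [DecidableEq α] {E : Finset α} {ρ : Finset α → ℤ} {i k : ℕ}

lemma poly_nonneg (h : IsPolymatroidOn E ρ) {X : Finset α} (hX : X ⊆ E) : 0 ≤ ρ X := by
  have := h.2.1 ∅ X (Finset.empty_subset _) hX
  rw [h.1] at this
  exact this

lemma poly_union_le (h : IsPolymatroidOn E ρ) {Y : Finset α} (hY : Y ⊆ E) :
    ∀ Z : Finset α, Z ⊆ E → ρ (Y ∪ Z) ≤ ρ Y + ∑ e ∈ Z, ρ {e} := by
  intro Z
  induction Z using Finset.induction_on with
  | empty => simp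
  | @insert a Z ha ih =>
    intro hZ
    have haE : a ∈ E := hZ (Finset.mem_insert_self a Z)
    have hZE : Z ⊆ E := (Finset.insert_subset_iff.mp hZ).2
    have hsub := h.2.2 (Y ∪ Z) {a} (Finset.union_subset hY hZE)
      (Finset.singleton_subset_iff.mpr haE)
    have h0 : 0 ≤ ρ ((Y ∪ Z) ∩ {a}) := poly_nonneg h
      (le_trans (Finset.inter_subset_left) (Finset.union_subset hY hZE))
    have heq : Y ∪ insert a Z = (Y ∪ Z) ∪ {a} := by
      ext x; simp
    rw [heq, Finset.sum_insert ha]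
    have := ih hZE
    linarith

lemma dual_poly (h : IsPolymatroidOn E ρ) (hpi : ∀ e ∈ E, ρ {e} ≤ (i : ℤ)) :
    IsPolymatroidOn E (IDual i E ρ) := by
  refine ⟨by simp [IDual], ?_, ?_⟩
  · intro A B hAB hBE
    unfold IDual
    have h1 : E \ A = (E \ B) ∪ (B \ A) := by
      ext x
      simp only [Finset.mem_sdiff, Finset.mem_union]
      constructor
      · intro ⟨hx, hxa⟩; by_cases hb : x ∈ B <;> tauto
      · rintro (⟨h1, h2⟩ | ⟨h1, h2⟩)
        · exact ⟨h1, fun hx => h2 (hAB hx)⟩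
        · exact ⟨hBE h1, h2⟩
    have h2 : ρ (E \ A) ≤ ρ (E \ B) + ∑ e ∈ B \ A, ρ {e} :=
      h1 ▸ poly_union_le h (Finset.sdiff_subset) (B \ A) (le_trans Finset.sdiff_subset hBE)
    have h3 : ∑ e ∈ B \ A, ρ {e} ≤ (i : ℤ) * (B \ A).card := by
      rw [mul_comm]
      calc ∑ e ∈ B \ A, ρ {e} ≤ ∑ e ∈ B \ A, (i : ℤ) :=
        Finset.sum_le_sum (fun e he => hpi e (hBE (Finset.mem_sdiff.mp he).1))
      _ = (B \ A).card * (i : ℤ) := by rw [Finset.sum_const, nsmul_eq_mul]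
    have h4 : (B \ A).card + A.card = B.card := by
      rw [Finset.card_sdiff_add_card_eq_card hAB]
    have h5 : ((B \ A).card : ℤ) + A.card = B.card := by exact_mod_cast h4
    nlinarith [h.2.1 (E \ B) (E \ B) le_rfl Finset.sdiff_subset]
  · intro A B hA hB
    unfold IDual
    have h1 : E \ (A ∪ B) = (E \ A) ∩ (E \ B) := by
      ext x; simp; tauto
    have h2 : E \ (A ∩ B) = (E \ A) ∪ (E \ B) := by
      ext x; simp; tauto
    have hsub := h.2.2 (E \ A) (E \ B) Finset.sdiff_subset Finset.sdiff_subset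
    have hc : (A ∪ B).card + (A ∩ B).card = A.card + B.card :=
      Finset.card_union_add_card_inter A B
    have hc' : ((A ∪ B).card : ℤ) + (A ∩ B).card = A.card + B.card := by exact_mod_cast hc
    rw [h1, h2]
    nlinarith

lemma dual_single (h : IsPolymatroidOn E ρ) {e : α} (he : e ∈ E) :
    IDual i E ρ {e} ≤ (i : ℤ) := by
  unfold IDual
  have := h.2.1 (E \ {e}) E Finset.sdiff_subset le_rfl
  simp only [Finset.card_singleton, Nat.cast_one, mul_one]
  linarith

lemma dual_dual (h : IsPolymatroidOn E ρ) {X : Finset α} (hX : X ⊆ E) :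
    IDual i E (IDual i E ρ) X = ρ X := by
  unfold IDual
  rw [Finset.sdiff_self, Finset.sdiff_sdiff_eq_self hX, h.1]
  have h4 : (E \ X).card + X.card = E.card := Finset.card_sdiff_add_card_eq_card hX
  have h5 : ((E \ X).card : ℤ) + X.card = E.card := by exact_mod_cast h4
  nlinarith [h5]

end Aux

section Main
variable [DecidableEq α] {E : Finset α} {ρ : Finset α → ℤ} {i k : ℕ}

lemma mat_single_nonneg {M : Finset α → ℤ} (hM : IsMatroidRankOn E M) {e : α} (he : e ∈ E) :
    0 ≤ M {e} := poly_nonneg hM.1 (Finset.singleton_subset_iff.mpr he)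

/-- loops can be freely added without changing rank -/
lemma loops_union {M : Finset α → ℤ} (hM : IsPolymatroidOn E M) {Y L : Finset α}
    (hY : Y ⊆ E) (hL : L ⊆ E) (hloop : ∀ e ∈ L, M {e} = 0) :
    M (Y ∪ L) = M Y := by
  have h1 := poly_union_le hM hY L hL
  have h2 : ∑ e ∈ L, M {e} = 0 := Finset.sum_eq_zero hloop
  have h3 := hM.2.1 Y (Y ∪ L) Finset.subset_union_left (Finset.union_subset hY hL)
  omega

lemma kdec_dual (hik : i ≤ k) (hρ : IsPolymatroidOn E ρ)
    (hpi : ∀ e ∈ E, ρ {e} ≤ (i : ℤ))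
    (hdec : KDecomposable k E ρ) : KDecomposable k E (IDual i E ρ) := by
  classical
  obtain ⟨M, hM, hsum⟩ := hdec
  -- loops of M j at e
  set loops : α → Finset (Fin k) := fun e => Finset.univ.filter (fun j => M j {e} ≤ 0) with hloops
  have hcard : ∀ e ∈ E, k - i ≤ (loops e).card := by
    intro e he
    have hF : ((Finset.univ.filter (fun j => ¬ M j {e} ≤ 0)).card : ℤ)
        ≤ ∑ j : Fin k, M j {e} := by
      calc ((Finset.univ.filter (fun j => ¬ M j {e} ≤ 0)).card : ℤ)
          = ∑ j ∈ Finset.univ.filter (fun j => ¬ M j {e} ≤ 0), 1 := by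
            simp
        _ ≤ ∑ j ∈ Finset.univ.filter (fun j => ¬ M j {e} ≤ 0), M j {e} :=
            Finset.sum_le_sum (fun j hj => by
              have := (Finset.mem_filter.mp hj).2; omega)
        _ ≤ ∑ j : Fin k, M j {e} :=
            Finset.sum_le_sum_of_subset_of_nonneg (Finset.filter_subset _ _)
              (fun j _ _ => mat_single_nonneg (hM j) he)
    have hsum_e : ∑ j : Fin k, M j {e} = ρ {e} :=
      (hsum {e} (Finset.singleton_subset_iff.mpr he)).symm
    have h1 : (Finset.univ.filter (fun j => ¬ M j {e} ≤ 0)).card ≤ i := by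
      have : ((Finset.univ.filter (fun j => ¬ M j {e} ≤ 0)).card : ℤ) ≤ (i : ℤ) :=
        le_trans hF (hsum_e ▸ hpi e he)
      exact_mod_cast this
    have h2 := Finset.card_filter_add_card_filter_not
      (s := (Finset.univ : Finset (Fin k))) (p := fun j => M j {e} ≤ 0)
    simp only [Finset.card_univ, Fintype.card_fin] at h2
    simp only [hloops]
    omega
  -- choose for each e ∈ E a set S e of k - i loop indices
  have hchoose : ∀ e : α, ∃ S : Finset (Fin k),
      (e ∈ E → S ⊆ loops e ∧ S.card = k - i) := by
    intro e
    by_cases he : e ∈ E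
    · obtain ⟨S, hS1, hS2⟩ := Finset.exists_subset_card_eq (hcard e he)
      exact ⟨S, fun _ => ⟨hS1, hS2⟩⟩
    · exact ⟨∅, fun h => absurd h he⟩
  choose S hS using hchoose
  set C : Fin k → Finset α := fun j => E.filter (fun e => j ∈ S e) with hC
  set D : Fin k → Finset α → ℤ := fun j => IDual 1 E (M j) with hD
  have hDpoly : ∀ j, IsPolymatroidOn E (D j) :=
    fun j => dual_poly (hM j).1 (fun e he => by exact_mod_cast (hM j).2 e he)
  set N : Fin k → Finset α → ℤ := fun j X => D j (X \ C j) with hN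
  refine ⟨N, ?_, ?_⟩
  · intro j
    refine ⟨⟨?_, ?_, ?_⟩, ?_⟩
    · simp only [hN, Finset.empty_sdiff]
      exact (hDpoly j).1
    · intro A B hAB hBE
      exact (hDpoly j).2.1 _ _ (Finset.sdiff_subset_sdiff hAB le_rfl)
        (le_trans Finset.sdiff_subset hBE)
    · intro A B hA hB
      have h1 : (A ∪ B) \ C j = (A \ C j) ∪ (B \ C j) := by ext x; simp; tauto
      have h2 : (A ∩ B) \ C j = (A \ C j) ∩ (B \ C j) := by ext x; simp; tauto
      simp only [hN, h1, h2]
      exact (hDpoly j).2.2 _ _ (le_trans Finset.sdiff_subset hA)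
        (le_trans Finset.sdiff_subset hB)
    · intro e he
      have h1 : N j {e} ≤ D j {e} :=
        (hDpoly j).2.1 _ _ (Finset.sdiff_subset) (Finset.singleton_subset_iff.mpr he)
      have h2 : D j {e} ≤ (1 : ℤ) := by
        have := dual_single (i := 1) (hM j).1 he
        exact_mod_cast this
      exact le_trans h1 h2
  · intro X hX
    -- coloop identity : D j X = N j X + |X ∩ C j|
    have key : ∀ j, D j X = N j X + ((X ∩ C j).card : ℤ) := by
      intro j
      have hCloop : ∀ e ∈ X ∩ C j, M j {e} = 0 := by
        intro e he
        obtain ⟨heX, heC⟩ := Finset.mem_inter.mp he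
        have heE : e ∈ E := hX heX
        have hjS : j ∈ S e := (Finset.mem_filter.mp heC).2
        have := (hS e heE).1 hjS
        have hle : M j {e} ≤ 0 := (Finset.mem_filter.mp this).2
        have hge : 0 ≤ M j {e} := mat_single_nonneg (hM j) heE
        omega
      have hset : E \ (X \ C j) = (E \ X) ∪ (X ∩ C j) := by
        ext x
        simp only [Finset.mem_sdiff, Finset.mem_union, Finset.mem_inter]
        constructor
        · intro ⟨hxE, hx⟩
          by_cases hxX : x ∈ X
          · right; exact ⟨hxX, by tauto⟩
          · left; exact ⟨hxE, hxX⟩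
        · rintro (⟨h1, h2⟩ | ⟨h1, h2⟩)
          · exact ⟨h1, fun hx => h2 hx.1⟩
          · exact ⟨hX h1, fun hx => hx.2 h2⟩
      have hMeq : M j (E \ (X \ C j)) = M j (E \ X) := by
        rw [hset]
        exact loops_union (hM j).1 Finset.sdiff_subset
          (le_trans Finset.inter_subset_left hX) hCloop
      have hcard2 : (X \ C j).card + (X ∩ C j).card = X.card := by
        have : X \ C j = X \ (X ∩ C j) := by
          ext x; simp only [Finset.mem_sdiff, Finset.mem_inter]; tauto
        rw [this, Finset.card_sdiff_add_card_eq_card Finset.inter_subset_left]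
      have hcard2' : ((X \ C j).card : ℤ) + ((X ∩ C j).card : ℤ) = (X.card : ℤ) := by
        exact_mod_cast hcard2
      simp only [hN, hD, IDual, hMeq, Nat.cast_one, one_mul]
      linarith
    -- double counting
    have hdouble : ∑ j : Fin k, ((X ∩ C j).card : ℤ) = ((k - i : ℕ) : ℤ) * X.card := by
      have h1 : ∀ j : Fin k, X ∩ C j = X.filter (fun e => j ∈ S e) := by
        intro j
        ext x
        simp only [Finset.mem_inter, Finset.mem_filter, hC]
        exact ⟨fun ⟨h1, _, h3⟩ => ⟨h1, h3⟩, fun ⟨h1, h2⟩ => ⟨h1, hX h1, h2⟩⟩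
      have h2 : ∑ j : Fin k, (X ∩ C j).card = ∑ e ∈ X, (S e).card := by
        simp only [h1, Finset.card_filter]
        rw [Finset.sum_comm]
        refine Finset.sum_congr rfl (fun e _ => ?_)
        rw [← Finset.card_filter, Finset.filter_univ_mem]
      have h3 : ∑ e ∈ X, (S e).card = X.card * (k - i) := by
        rw [Finset.sum_congr rfl (fun e he => (hS e (hX he)).2), Finset.sum_const,
          smul_eq_mul]
      have h4 : ∑ j : Fin k, ((X ∩ C j).card : ℤ) = ((∑ j : Fin k, (X ∩ C j).card : ℕ) : ℤ) := by
        exact_mod_cast rfl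
      rw [h4, h2, h3]
      push_cast
      ring
    have hsum1 : ∑ j : Fin k, D j X = (k : ℤ) * X.card - ρ E + ρ (E \ X) := by
      rw [hsum E le_rfl, hsum (E \ X) Finset.sdiff_subset]
      simp only [hD, IDual, Nat.cast_one, one_mul]
      rw [Finset.sum_add_distrib, Finset.sum_sub_distrib, Finset.sum_const,
        Finset.card_univ, Fintype.card_fin, nsmul_eq_mul]
    have : ∑ j : Fin k, N j X = ∑ j : Fin k, D j X - ∑ j : Fin k, ((X ∩ C j).card : ℤ) := by
      rw [← Finset.sum_sub_distrib]
      congr 1; ext j; rw [key j]; ring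
    rw [this, hsum1, hdouble, IDual]
    rw [Nat.cast_sub hik]; ring

end Main

section Final
variable [DecidableEq α] {E : Finset α} {i k : ℕ}

lemma kdec_dual' (hik : i ≤ k) {ρ : Finset α → ℤ} (hρ : IsPolymatroidOn E ρ)
    (hpi : ∀ e ∈ E, ρ {e} ≤ (i : ℤ))
    (hdec : KDecomposable k E (IDual i E ρ)) : KDecomposable k E ρ := by
  have h1 : KDecomposable k E (IDual i E (IDual i E ρ)) :=
    kdec_dual hik (dual_poly hρ hpi) (fun e he => dual_single hρ he) hdec
  obtain ⟨M, hM, hs⟩ := h1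
  exact ⟨M, hM, fun X hX => by rw [← dual_dual (i := i) hρ hX]; exact hs X hX⟩


end Final

theorem stmt12 [DecidableEq α] (E : Finset α) (i : ℕ) (hi : 0 < i)
    (ρ : Finset α → ℤ)
    (hρ : IsPolymatroidOn E ρ) (hpi : ∀ e ∈ E, ρ {e} ≤ (i : ℤ)) :
    (∀ k : ℕ, i ≤ k →
      (KDecomposable k E ρ ↔ KDecomposable k E (IDual i E ρ))) ∧
    ((∀ k' : ℕ, 0 < k' → k' < i →
        ¬ KDecomposable k' E ρ ∧ ¬ KDecomposable k' E (IDual i E ρ)) →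
      ∀ m : ℕ,
        IsLeast {k : ℕ | 0 < k ∧ KDecomposable k E ρ} m ↔
        IsLeast {k : ℕ | 0 < k ∧ KDecomposable k E (IDual i E ρ)} m) := by
  have part1 : ∀ k : ℕ, i ≤ k →
      (KDecomposable k E ρ ↔ KDecomposable k E (IDual i E ρ)) :=
    fun k hik => ⟨kdec_dual hik hρ hpi, kdec_dual' hik hρ hpi⟩
  refine ⟨part1, fun H m => ?_⟩
  have hset : {k : ℕ | 0 < k ∧ KDecomposable k E ρ} =
      {k : ℕ | 0 < k ∧ KDecomposable k E (IDual i E ρ)} := by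
    ext k
    simp only [Set.mem_setOf_eq]
    constructor
    · rintro ⟨hk, hd⟩
      rcases le_or_gt i k with h | h
      · exact ⟨hk, (part1 k h).mp hd⟩
      · exact absurd hd (H k hk h).1
    · rintro ⟨hk, hd⟩
      rcases le_or_gt i k with h | h
      · exact ⟨hk, (part1 k h).mpr hd⟩
      · exact absurd hd (H k hk h).2
  rw [hset]
end
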